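/- arXiv:2008.13708 — 7 statements merged into one kernel-verified Lean document; each statement's English description precedes it below -/
import Mathlib

section
/- For a bounded linear operator T on a complex Hilbert space H and α ∈ (0,1], the quantity ‖T‖_α = sup{ √(α|⟨Tx,x⟩|² + (1−α)‖Tx‖²) : x ∈ H, ‖x‖=1 } satisfies w(T) ≤ ‖T‖_α ≤ √(4−3α)·w(T), where w(T) = sup{|⟨Tx,x⟩| : ‖x‖=1} is the numerical radius of T. -/
open scoped Matrix

/-- The `α`-norm of a bounded operator `T`:
`‖T‖_α = sup {√(α|⟨Tx,x⟩|² + (1-α)‖Tx‖²) : ‖x‖ = 1}`. -/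
noncomputable def alphaNorm {H : Type*} [NormedAddCommGroup H] [InnerProductSpace ℂ H]
    (α : ℝ) (T : H →L[ℂ] H) : ℝ :=
  sSup {r : ℝ | ∃ x : H, ‖x‖ = 1 ∧
    r = Real.sqrt (α * ‖(inner ℂ (T x) x : ℂ)‖ ^ 2 + (1 - α) * ‖T x‖ ^ 2)}

/-- The numerical radius `w(T) = sup {|⟨Tx,x⟩| : ‖x‖ = 1}`. -/
noncomputable def numRadius {H : Type*} [NormedAddCommGroup H] [InnerProductSpace ℂ H]
    (T : H →L[ℂ] H) : ℝ :=
  sSup {r : ℝ | ∃ x : H, ‖x‖ = 1 ∧ r = ‖(inner ℂ (T x) x : ℂ)‖}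

lemma cbound (a b c d : ℂ) :
    ‖(a - b - Complex.I * c + Complex.I * d) / 4‖ ≤ (‖a‖ + ‖b‖ + ‖c‖ + ‖d‖) / 4 := by
  rw [norm_div]
  have h4 : ‖(4 : ℂ)‖ = 4 := by norm_num
  rw [h4]
  gcongr
  have h1 := norm_add_le (a - b - Complex.I * c) (Complex.I * d)
  have h2 := norm_sub_le (a - b) (Complex.I * c)
  have h3 := norm_sub_le a b
  have hc : ‖Complex.I * c‖ = ‖c‖ := by simp [norm_mul]
  have hd : ‖Complex.I * d‖ = ‖d‖ := by simp [norm_mul]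
  rw [hc] at h2; rw [hd] at h1
  linarith

section Aux

variable {H : Type*} [NormedAddCommGroup H] [InnerProductSpace ℂ H] (T : H →L[ℂ] H)

lemma numRadius_bddAbove :
    BddAbove {r : ℝ | ∃ x : H, ‖x‖ = 1 ∧ r = ‖(inner ℂ (T x) x : ℂ)‖} := by
  refine ⟨‖T‖, ?_⟩
  rintro r ⟨x, hx, rfl⟩
  calc ‖(inner ℂ (T x) x : ℂ)‖ ≤ ‖T x‖ * ‖x‖ := norm_inner_le_norm _ _
    _ ≤ ‖T‖ * ‖x‖ * ‖x‖ := by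
        have := T.le_opNorm x
        nlinarith [norm_nonneg x]
    _ = ‖T‖ := by rw [hx]; ring

lemma numRadius_nonneg : 0 ≤ numRadius T :=
  Real.sSup_nonneg (by rintro r ⟨x, hx, rfl⟩; positivity)

lemma inner_le_numRadius {x : H} (hx : ‖x‖ = 1) :
    ‖(inner ℂ (T x) x : ℂ)‖ ≤ numRadius T :=
  le_csSup (numRadius_bddAbove T) ⟨x, hx, rfl⟩

lemma inner_le_numRadius_sq (u : H) :
    ‖(inner ℂ (T u) u : ℂ)‖ ≤ numRadius T * ‖u‖ ^ 2 := by
  rcases eq_or_ne u 0 with rfl | hu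
  · simp
  · have hnu : ‖u‖ ≠ 0 := norm_ne_zero_iff.mpr hu
    have hcu : ((‖u‖ : ℂ)) ≠ 0 := by exact_mod_cast hnu
    set v : H := ((‖u‖ : ℂ))⁻¹ • u with hv
    have hvn : ‖v‖ = 1 := by
      rw [hv, norm_smul, norm_inv, Complex.norm_real, Real.norm_eq_abs, abs_norm,
        inv_mul_cancel₀ hnu]
    have huv : u = ((‖u‖ : ℂ)) • v := by
      rw [hv, smul_smul, mul_inv_cancel₀ hcu, one_smul]
    have key : ‖(inner ℂ (T u) u : ℂ)‖ = ‖u‖ ^ 2 * ‖(inner ℂ (T v) v : ℂ)‖ := by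
      conv_lhs => rw [huv]
      rw [map_smul, inner_smul_left, inner_smul_right, norm_mul, norm_mul,
        RCLike.norm_conj, Complex.norm_real, Real.norm_eq_abs, abs_norm]
      ring
    rw [key]
    have h1 : ‖(inner ℂ (T v) v : ℂ)‖ ≤ numRadius T := inner_le_numRadius T hvn
    calc ‖u‖ ^ 2 * ‖(inner ℂ (T v) v : ℂ)‖ ≤ ‖u‖ ^ 2 * numRadius T :=
          mul_le_mul_of_nonneg_left h1 (by positivity)
      _ = numRadius T * ‖u‖ ^ 2 := by ring

lemma norm_apply_le_two_numRadius {x : H} (hx : ‖x‖ = 1) :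
    ‖T x‖ ≤ 2 * numRadius T := by
  rcases eq_or_ne (T x) 0 with h0 | h0
  · rw [h0, norm_zero]
    have := numRadius_nonneg T
    linarith
  · have hnTx : ‖T x‖ ≠ 0 := norm_ne_zero_iff.mpr h0
    have hcTx : ((‖T x‖ : ℂ)) ≠ 0 := by exact_mod_cast hnTx
    set y : H := ((‖T x‖ : ℂ))⁻¹ • T x with hy
    have hyn : ‖y‖ = 1 := by
      rw [hy, norm_smul, norm_inv, Complex.norm_real, Real.norm_eq_abs, abs_norm,
        inv_mul_cancel₀ hnTx]
    have hinner : ‖(inner ℂ (T x) y : ℂ)‖ = ‖T x‖ := by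
      rw [hy, inner_smul_right, @inner_self_eq_norm_sq_to_K ℂ]
      simp only [norm_mul, norm_inv, norm_pow, Complex.norm_real, Real.norm_eq_abs, abs_norm]
      field_simp
      simp
    have pol := inner_map_polarization' (T : H →ₗ[ℂ] H) x y
    simp only [ContinuousLinearMap.coe_coe] at pol
    have b1 := inner_le_numRadius_sq T (x + y)
    have b2 := inner_le_numRadius_sq T (x - y)
    have b3 := inner_le_numRadius_sq T (x + Complex.I • y)
    have b4 := inner_le_numRadius_sq T (x - Complex.I • y)
    have hIy : ‖Complex.I • y‖ = 1 := by
      rw [norm_smul, Complex.norm_I, one_mul, hyn]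
    have par1 : ‖x + y‖ ^ 2 + ‖x - y‖ ^ 2 = 4 := by
      have := parallelogram_law_with_norm ℂ x y
      rw [hx, hyn] at this
      nlinarith [this]
    have par2 : ‖x + Complex.I • y‖ ^ 2 + ‖x - Complex.I • y‖ ^ 2 = 4 := by
      have := parallelogram_law_with_norm ℂ x (Complex.I • y)
      rw [hx, hIy] at this
      nlinarith [this]
    have hb : ‖(inner ℂ (T x) y : ℂ)‖ ≤ 2 * numRadius T := by
      rw [pol]
      refine (cbound _ _ _ _).trans ?_
      have hWnn := numRadius_nonneg T
      nlinarith [b1, b2, b3, b4, par1, par2]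
    rw [hinner] at hb
    exact hb

end Aux

/-- For `0 < α ≤ 1`, `w(T) ≤ ‖T‖_α ≤ √(4 - 3α) · w(T)`. -/
theorem alphaNorm_numRadius_bounds {H : Type*} [NormedAddCommGroup H] [InnerProductSpace ℂ H]
    (α : ℝ) (hα0 : 0 < α) (hα1 : α ≤ 1) (T : H →L[ℂ] H) :
    numRadius T ≤ alphaNorm α T ∧ alphaNorm α T ≤ Real.sqrt (4 - 3 * α) * numRadius T := by
  set S := {r : ℝ | ∃ x : H, ‖x‖ = 1 ∧
    r = Real.sqrt (α * ‖(inner ℂ (T x) x : ℂ)‖ ^ 2 + (1 - α) * ‖T x‖ ^ 2)} with hS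
  have hSbdd : BddAbove S := by
    refine ⟨2 * numRadius T, ?_⟩
    rintro r ⟨x, hx, rfl⟩
    have h1 : ‖(inner ℂ (T x) x : ℂ)‖ ≤ numRadius T := inner_le_numRadius T hx
    have h2 : ‖T x‖ ≤ 2 * numRadius T := norm_apply_le_two_numRadius T hx
    have hWnn := numRadius_nonneg T
    have ha2 : ‖(inner ℂ (T x) x : ℂ)‖ ^ 2 ≤ numRadius T ^ 2 :=
      pow_le_pow_left₀ (norm_nonneg _) h1 2
    have hb2 : ‖T x‖ ^ 2 ≤ (2 * numRadius T) ^ 2 :=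
      pow_le_pow_left₀ (norm_nonneg _) h2 2
    have : α * ‖(inner ℂ (T x) x : ℂ)‖ ^ 2 + (1 - α) * ‖T x‖ ^ 2 ≤ (2 * numRadius T) ^ 2 := by
      nlinarith [sq_nonneg (numRadius T)]
    calc Real.sqrt (α * ‖(inner ℂ (T x) x : ℂ)‖ ^ 2 + (1 - α) * ‖T x‖ ^ 2)
        ≤ Real.sqrt ((2 * numRadius T) ^ 2) := Real.sqrt_le_sqrt this
      _ = 2 * numRadius T := Real.sqrt_sq (by positivity)
  have hA_nonneg : 0 ≤ alphaNorm α T :=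
    Real.sSup_nonneg (by rintro r ⟨x, hx, rfl⟩; positivity)
  constructor
  · -- w(T) ≤ ‖T‖_α
    apply Real.sSup_le _ hA_nonneg
    rintro r ⟨x, hx, rfl⟩
    have hCS : ‖(inner ℂ (T x) x : ℂ)‖ ≤ ‖T x‖ := by
      calc ‖(inner ℂ (T x) x : ℂ)‖ ≤ ‖T x‖ * ‖x‖ := norm_inner_le_norm _ _
        _ = ‖T x‖ := by rw [hx, mul_one]
    have key : ‖(inner ℂ (T x) x : ℂ)‖
        ≤ Real.sqrt (α * ‖(inner ℂ (T x) x : ℂ)‖ ^ 2 + (1 - α) * ‖T x‖ ^ 2) := by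
      rw [show ‖(inner ℂ (T x) x : ℂ)‖ = Real.sqrt (‖(inner ℂ (T x) x : ℂ)‖ ^ 2) from
        (Real.sqrt_sq (norm_nonneg _)).symm]
      apply Real.sqrt_le_sqrt
      rw [Real.sq_sqrt (by positivity)]
      have ha2 : ‖(inner ℂ (T x) x : ℂ)‖ ^ 2 ≤ ‖T x‖ ^ 2 :=
        pow_le_pow_left₀ (norm_nonneg _) hCS 2
      nlinarith
    refine key.trans ?_
    exact le_csSup hSbdd ⟨x, hx, rfl⟩
  · -- ‖T‖_α ≤ √(4-3α) w(T)
    have hWnn := numRadius_nonneg T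
    apply Real.sSup_le _ (by positivity)
    rintro r ⟨x, hx, rfl⟩
    have h1 : ‖(inner ℂ (T x) x : ℂ)‖ ≤ numRadius T := inner_le_numRadius T hx
    have h2 : ‖T x‖ ≤ 2 * numRadius T := norm_apply_le_two_numRadius T hx
    have ha2 : ‖(inner ℂ (T x) x : ℂ)‖ ^ 2 ≤ numRadius T ^ 2 :=
      pow_le_pow_left₀ (norm_nonneg _) h1 2
    have hb2 : ‖T x‖ ^ 2 ≤ (2 * numRadius T) ^ 2 :=
      pow_le_pow_left₀ (norm_nonneg _) h2 2
    have hle : α * ‖(inner ℂ (T x) x : ℂ)‖ ^ 2 + (1 - α) * ‖T x‖ ^ 2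
        ≤ (4 - 3 * α) * numRadius T ^ 2 := by
      nlinarith [sq_nonneg (numRadius T)]
    calc Real.sqrt (α * ‖(inner ℂ (T x) x : ℂ)‖ ^ 2 + (1 - α) * ‖T x‖ ^ 2)
        ≤ Real.sqrt ((4 - 3 * α) * numRadius T ^ 2) := Real.sqrt_le_sqrt hle
      _ = Real.sqrt (4 - 3 * α) * numRadius T := by
          rw [Real.sqrt_mul (by linarith), Real.sqrt_sq hWnn]
end

section
/- For a bounded linear operator T on a complex Hilbert space H and α ∈ [0,1], the α-norm satisfies max{1/2, √(1−α)}·‖T‖ ≤ ‖T‖_α ≤ ‖T‖, where ‖T‖ is the operator norm. -/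
open scoped Matrix

private lemma opNorm_le_of_unit {H : Type*} [NormedAddCommGroup H] [InnerProductSpace ℂ H]
    (T : H →L[ℂ] H) {C : ℝ} (hC : 0 ≤ C) (h : ∀ x : H, ‖x‖ = 1 → ‖T x‖ ≤ C) : ‖T‖ ≤ C := by
  refine T.opNorm_le_bound hC fun x => ?_
  rcases eq_or_ne x 0 with rfl | hx
  · simpa using mul_nonneg hC (norm_nonneg (0 : H))
  · have hxn : (0:ℝ) < ‖x‖ := norm_pos_iff.mpr hx
    have hu : ‖((‖x‖⁻¹ : ℂ) • x : H)‖ = 1 := by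
      rw [norm_smul]
      simp [abs_of_pos hxn, inv_mul_cancel₀ hxn.ne']
    have h2 := h _ hu
    rw [map_smul, norm_smul] at h2
    simp only [norm_inv, Complex.norm_real, Real.norm_eq_abs, abs_of_pos hxn] at h2
    rw [inv_mul_le_iff₀ hxn] at h2
    linarith [h2]

private lemma abcd_norm (A B C D : ℂ) :
    ‖A - B - Complex.I * C + Complex.I * D‖ ≤ ‖A‖ + ‖B‖ + ‖C‖ + ‖D‖ := by
  calc ‖A - B - Complex.I * C + Complex.I * D‖
      ≤ ‖A - B - Complex.I * C‖ + ‖Complex.I * D‖ := norm_add_le _ _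
    _ ≤ (‖A - B‖ + ‖Complex.I * C‖) + ‖Complex.I * D‖ := by
        gcongr; exact norm_sub_le _ _
    _ ≤ ((‖A‖ + ‖B‖) + ‖Complex.I * C‖) + ‖Complex.I * D‖ := by
        gcongr; exact norm_sub_le _ _
    _ = ‖A‖ + ‖B‖ + ‖C‖ + ‖D‖ := by
        rw [norm_mul, norm_mul, Complex.norm_I, one_mul, one_mul]

/-- If the quadratic form of `T` is bounded by `M‖z‖²`, then `‖T‖ ≤ 2M` (polarization). -/
private lemma opNorm_le_two_mul {H : Type*} [NormedAddCommGroup H] [InnerProductSpace ℂ H]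
    (T : H →L[ℂ] H) {M : ℝ} (hM : 0 ≤ M)
    (hq : ∀ z : H, ‖(inner ℂ (T z) z : ℂ)‖ ≤ M * ‖z‖ ^ 2) : ‖T‖ ≤ 2 * M := by
  -- polarization-based sesquilinear bound
  have hsesq : ∀ x y : H, ‖(inner ℂ (T x) y : ℂ)‖ ≤ M * (‖x‖ ^ 2 + ‖y‖ ^ 2) := by
    intro x y
    have pol : (4 : ℂ) * inner ℂ (T x) y =
        inner ℂ (T (x + y)) (x + y) - inner ℂ (T (x - y)) (x - y)
        - Complex.I * inner ℂ (T (x + Complex.I • y)) (x + Complex.I • y)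
        + Complex.I * inner ℂ (T (x - Complex.I • y)) (x - Complex.I • y) := by
      simp only [map_add, map_sub, map_smul, inner_add_left, inner_add_right,
        inner_sub_left, inner_sub_right, inner_smul_left, inner_smul_right,
        Complex.conj_I, RingHom.map_mul]
      ring_nf
      simp [Complex.I_sq]
      ring
    have h4 : (4 : ℝ) * ‖(inner ℂ (T x) y : ℂ)‖ = ‖(4 : ℂ) * inner ℂ (T x) y‖ := by
      rw [norm_mul]; norm_num
    have hpar1 : ‖x + y‖ ^ 2 + ‖x - y‖ ^ 2 = 2 * (‖x‖ ^ 2 + ‖y‖ ^ 2) := by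
      have := parallelogram_law_with_norm ℂ x y
      nlinarith [this]
    have hpar2 : ‖x + Complex.I • y‖ ^ 2 + ‖x - Complex.I • y‖ ^ 2
        = 2 * (‖x‖ ^ 2 + ‖y‖ ^ 2) := by
      have := parallelogram_law_with_norm ℂ x (Complex.I • y)
      have hIy : ‖Complex.I • y‖ = ‖y‖ := by
        rw [norm_smul, Complex.norm_I, one_mul]
      rw [hIy] at this
      nlinarith [this]
    have hbound : ‖(4 : ℂ) * inner ℂ (T x) y‖ ≤
        M * ‖x + y‖ ^ 2 + (M * ‖x - y‖ ^ 2 + (M * ‖x + Complex.I • y‖ ^ 2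
        + M * ‖x - Complex.I • y‖ ^ 2)) := by
      rw [pol]
      refine le_trans (abcd_norm _ _ _ _) ?_
      have h1 := hq (x + y)
      have h2 := hq (x - y)
      have h3 := hq (x + Complex.I • y)
      have h4' := hq (x - Complex.I • y)
      linarith
    rw [← h4] at hbound
    nlinarith [hbound, hpar1, hpar2]
  refine T.opNorm_le_bound (by linarith) fun x => ?_
  rcases eq_or_ne (T x) 0 with hTx | hTx
  · rw [hTx]; simpa using mul_nonneg (by linarith : (0:ℝ) ≤ 2 * M) (norm_nonneg x)
  · have hTxn : (0:ℝ) < ‖T x‖ := norm_pos_iff.mpr hTx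
    set y : H := ((‖x‖ / ‖T x‖ : ℝ) : ℂ) • T x with hy
    have h1 : ‖(inner ℂ (T x) y : ℂ)‖ = ‖x‖ * ‖T x‖ := by
      rw [hy, inner_smul_right, norm_mul, inner_self_eq_norm_sq_to_K, norm_pow]
      simp only [Complex.norm_real, RCLike.norm_ofReal, Real.norm_eq_abs,
        abs_of_nonneg (div_nonneg (norm_nonneg x) hTxn.le),
        abs_of_nonneg (norm_nonneg (T x))]
      field_simp
    have h2 : ‖y‖ = ‖x‖ := by
      rw [hy, norm_smul, Complex.norm_real, Real.norm_eq_abs,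
        abs_of_nonneg (div_nonneg (norm_nonneg x) hTxn.le)]
      field_simp
    have h3 := hsesq x y
    rw [h1, h2] at h3
    rcases eq_or_ne x 0 with rfl | hx0
    · simp only [map_zero] at hTx; exact absurd rfl hTx
    · have hxn : (0:ℝ) < ‖x‖ := norm_pos_iff.mpr hx0
      nlinarith [h3]

/-- For `α ∈ [0,1]`, `max{1/2, √(1-α)}·‖T‖ ≤ ‖T‖_α ≤ ‖T‖`. -/
theorem alphaNorm_opNorm_bounds {H : Type*} [NormedAddCommGroup H] [InnerProductSpace ℂ H]
    (α : ℝ) (hα0 : 0 ≤ α) (hα1 : α ≤ 1) (T : H →L[ℂ] H) :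
    max (1 / 2) (Real.sqrt (1 - α)) * ‖T‖ ≤ alphaNorm α T ∧ alphaNorm α T ≤ ‖T‖ := by
  set S : Set ℝ := {r : ℝ | ∃ x : H, ‖x‖ = 1 ∧
    r = Real.sqrt (α * ‖(inner ℂ (T x) x : ℂ)‖ ^ 2 + (1 - α) * ‖T x‖ ^ 2)} with hS
  have hSle : ∀ r ∈ S, r ≤ ‖T‖ := by
    rintro r ⟨x, hx, rfl⟩
    have hab : ‖(inner ℂ (T x) x : ℂ)‖ ≤ ‖T x‖ := by
      simpa [hx] using norm_inner_le_norm (𝕜 := ℂ) (T x) x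
    have hTx : ‖T x‖ ≤ ‖T‖ := by simpa [hx] using T.le_opNorm x
    have hsq : ‖(inner ℂ (T x) x : ℂ)‖ ^ 2 ≤ ‖T x‖ ^ 2 :=
      pow_le_pow_left₀ (norm_nonneg _) hab 2
    have h1 : α * ‖(inner ℂ (T x) x : ℂ)‖ ^ 2 + (1 - α) * ‖T x‖ ^ 2 ≤ ‖T x‖ ^ 2 := by
      nlinarith [hsq, hα0]
    calc Real.sqrt (α * ‖(inner ℂ (T x) x : ℂ)‖ ^ 2 + (1 - α) * ‖T x‖ ^ 2)
        ≤ Real.sqrt (‖T x‖ ^ 2) := Real.sqrt_le_sqrt h1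
      _ = ‖T x‖ := Real.sqrt_sq (norm_nonneg _)
      _ ≤ ‖T‖ := hTx
  have hbdd : BddAbove S := ⟨‖T‖, fun r hr => hSle r hr⟩
  have hub : alphaNorm α T ≤ ‖T‖ := Real.sSup_le hSle (norm_nonneg T)
  set M := alphaNorm α T with hM
  -- key bounds for unit vectors
  have key : ∀ x : H, ‖x‖ = 1 →
      ‖(inner ℂ (T x) x : ℂ)‖ ≤ M ∧ Real.sqrt (1 - α) * ‖T x‖ ≤ M := by
    intro x hx
    have hle : Real.sqrt (α * ‖(inner ℂ (T x) x : ℂ)‖ ^ 2 + (1 - α) * ‖T x‖ ^ 2) ≤ M :=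
      le_csSup hbdd ⟨x, hx, rfl⟩
    have hab : ‖(inner ℂ (T x) x : ℂ)‖ ≤ ‖T x‖ := by
      simpa [hx] using norm_inner_le_norm (𝕜 := ℂ) (T x) x
    have hsq : ‖(inner ℂ (T x) x : ℂ)‖ ^ 2 ≤ ‖T x‖ ^ 2 :=
      pow_le_pow_left₀ (norm_nonneg _) hab 2
    constructor
    · refine le_trans (Real.le_sqrt_of_sq_le ?_) hle
      nlinarith [hsq, hα0]
    · refine le_trans (Real.le_sqrt_of_sq_le ?_) hle
      have h1 : (Real.sqrt (1 - α) * ‖T x‖) ^ 2 = (1 - α) * ‖T x‖ ^ 2 := by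
        rw [mul_pow, Real.sq_sqrt (by linarith)]
      rw [h1]
      nlinarith [norm_nonneg (inner ℂ (T x) x : ℂ), sq_nonneg ‖(inner ℂ (T x) x : ℂ)‖]
  have hM0 : 0 ≤ M := by
    by_cases h : ∃ x : H, ‖x‖ = 1
    · obtain ⟨x, hx⟩ := h
      exact le_trans (norm_nonneg _) (key x hx).1
    · have hSempty : S = ∅ := by
        ext r
        simp only [hS, Set.mem_setOf_eq, Set.mem_empty_iff_false, iff_false]
        rintro ⟨x, hx, -⟩
        exact h ⟨x, hx⟩
      rw [hM, alphaNorm, ← hS, hSempty, Real.sSup_empty]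
  -- quadratic form bound for all vectors
  have keyz : ∀ z : H, ‖(inner ℂ (T z) z : ℂ)‖ ≤ M * ‖z‖ ^ 2 := by
    intro z
    rcases eq_or_ne z 0 with rfl | hz
    · simp
    · have hzn : (0:ℝ) < ‖z‖ := norm_pos_iff.mpr hz
      set u : H := (‖z‖⁻¹ : ℂ) • z with hu
      have hun : ‖u‖ = 1 := by
        rw [hu, norm_smul]; simp [abs_of_pos hzn, inv_mul_cancel₀ hzn.ne']
      have hzu : z = (‖z‖ : ℂ) • u := by
        rw [hu, smul_smul]
        rw [show ((‖z‖ : ℂ)) * (‖z‖ : ℂ)⁻¹ = 1 from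
          mul_inv_cancel₀ (by exact_mod_cast hzn.ne')]
        simp
      calc ‖(inner ℂ (T z) z : ℂ)‖
          = ‖(inner ℂ (T ((‖z‖ : ℂ) • u)) ((‖z‖ : ℂ) • u) : ℂ)‖ := by rw [← hzu]
        _ = ‖z‖ ^ 2 * ‖(inner ℂ (T u) u : ℂ)‖ := by
            rw [map_smul, inner_smul_left, inner_smul_right]
            simp only [norm_mul, Complex.norm_real, RCLike.norm_conj, Real.norm_eq_abs,
              abs_of_pos hzn]
            ring
        _ ≤ ‖z‖ ^ 2 * M := mul_le_mul_of_nonneg_left (key u hun).1 (by positivity)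
        _ = M * ‖z‖ ^ 2 := by ring
  have hT2M : ‖T‖ ≤ 2 * M := opNorm_le_two_mul T hM0 keyz
  refine ⟨?_, hub⟩
  rw [max_mul_of_nonneg _ _ (norm_nonneg T)]
  refine max_le (by linarith) ?_
  rcases eq_or_lt_of_le (Real.sqrt_nonneg (1 - α)) with hs0 | hs0
  · rw [← hs0]; simpa using hM0
  · have hTle : ‖T‖ ≤ M / Real.sqrt (1 - α) := by
      refine opNorm_le_of_unit T (div_nonneg hM0 hs0.le) fun x hx => ?_
      have h := (key x hx).2
      rw [le_div_iff₀ hs0]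
      linarith [h, mul_comm (Real.sqrt (1 - α)) ‖T x‖]
    calc Real.sqrt (1 - α) * ‖T‖ ≤ Real.sqrt (1 - α) * (M / Real.sqrt (1 - α)) :=
          mul_le_mul_of_nonneg_left hTle hs0.le
      _ = M := by field_simp
end

section
/- For A, B ∈ B(H), the off-diagonal operator matrices [[0, A],[B, 0]] and [[0, B],[A, 0]] on H ⊕ H have equal α-norms. -/
open scoped Matrix

variable {H : Type*} [NormedAddCommGroup H] [InnerProductSpace ℂ H]

/-- The canonical inclusion `H × H → H ⊕₂ H`. -/
noncomputable def pr (x y : H) : WithLp 2 (H × H) := (WithLp.equiv 2 (H × H)).symm (x, y)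

lemma pr_eta (z : WithLp 2 (H × H)) : pr z.fst z.snd = z := rfl

lemma pr_fst (x y : H) : (pr x y).fst = x := rfl
lemma pr_snd (x y : H) : (pr x y).snd = y := rfl

lemma norm_pr_swap (x y : H) : ‖pr y x‖ = ‖pr x y‖ := by
  have h1 := WithLp.prod_norm_sq_eq_of_L2 (pr y x)
  have h2 := WithLp.prod_norm_sq_eq_of_L2 (pr x y)
  rw [pr_fst, pr_snd] at h1 h2
  have : ‖pr y x‖ ^ 2 = ‖pr x y‖ ^ 2 := by rw [h1, h2]; ring
  have := congrArg Real.sqrt this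
  rwa [Real.sqrt_sq (norm_nonneg _), Real.sqrt_sq (norm_nonneg _)] at this

lemma inner_pr_swap (a b c d : H) :
    (inner ℂ (pr b a) (pr d c) : ℂ) = inner ℂ (pr a b) (pr c d) := by
  rw [WithLp.prod_inner_apply, WithLp.prod_inner_apply]
  exact add_comm _ _

/-- `‖[[0, A],[B, 0]]‖_α = ‖[[0, B],[A, 0]]‖_α`. -/
theorem alphaNorm_offdiag_swap (α : ℝ) (hα0 : 0 ≤ α) (hα1 : α ≤ 1) (A B : H →L[ℂ] H)
    (T S : WithLp 2 (H × H) →L[ℂ] WithLp 2 (H × H))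
    (hT : ∀ x y : H, T (pr x y) = pr (A y) (B x))
    (hS : ∀ x y : H, S (pr x y) = pr (B y) (A x)) :
    alphaNorm α T = alphaNorm α S := by
  unfold alphaNorm
  congr 1
  ext r
  constructor
  · rintro ⟨z, hz, rfl⟩
    refine ⟨pr z.snd z.fst, by rw [norm_pr_swap, pr_eta, hz], ?_⟩
    have hSz : S (pr z.snd z.fst) = pr (B z.fst) (A z.snd) := hS _ _
    have hTz : T z = pr (A z.snd) (B z.fst) := hT z.fst z.snd
    rw [hSz, hTz, norm_pr_swap, inner_pr_swap, pr_eta]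
  · rintro ⟨z, hz, rfl⟩
    refine ⟨pr z.snd z.fst, by rw [norm_pr_swap, pr_eta, hz], ?_⟩
    have hTz : T (pr z.snd z.fst) = pr (A z.fst) (B z.snd) := hT _ _
    have hSz : S z = pr (B z.snd) (A z.fst) := hS z.fst z.snd
    rw [hTz, hSz, norm_pr_swap, inner_pr_swap, pr_eta]
end

section
/- For A, B ∈ B(H), the operator matrix [[A, B],[B, A]] on H ⊕ H has the same α-norm as the block diagonal operator diag(A−B, A+B). -/
open scoped Matrix

variable {H : Type*} [NormedAddCommGroup H] [InnerProductSpace ℂ H]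

/-- The scalar `1/√2` as a complex number. -/
noncomputable def cc : ℂ := ((Real.sqrt 2)⁻¹ : ℝ)

lemma cc_mul_cc : cc * cc = 2⁻¹ := by
  have h : (Real.sqrt 2) * (Real.sqrt 2) = 2 := Real.mul_self_sqrt (by norm_num)
  simp only [cc, ← Complex.ofReal_mul, ← mul_inv]
  rw [h]; norm_num

lemma inner_pr (a b x y : H) :
    (inner ℂ (pr a b) (pr x y) : ℂ) = inner ℂ a x + inner ℂ b y := by
  simp [pr, WithLp.prod_inner_apply]

lemma inner_key (a b x y : H) :
    (inner ℂ (pr (cc • (a - b)) (cc • (a + b))) (pr (cc • (x - y)) (cc • (x + y))) : ℂ)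
      = inner ℂ (pr a b) (pr x y) := by
  rw [inner_pr, inner_pr, inner_smul_left, inner_smul_left, inner_smul_right, inner_smul_right]
  have hc : starRingEnd ℂ cc = cc := by simp [cc]
  rw [hc, ← mul_assoc, ← mul_assoc, cc_mul_cc]
  rw [inner_sub_left, inner_sub_right, inner_sub_right, inner_add_left, inner_add_right,
    inner_add_right]
  ring

lemma norm_key (a b : H) :
    ‖pr (cc • (a - b)) (cc • (a + b))‖ = ‖pr a b‖ := by
  have h := inner_key a b a b
  rw [inner_self_eq_norm_sq_to_K (𝕜 := ℂ), inner_self_eq_norm_sq_to_K (𝕜 := ℂ)] at h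
  have : ‖pr (cc • (a - b)) (cc • (a + b))‖ ^ 2 = ‖pr a b‖ ^ 2 := by exact_mod_cast h
  exact (sq_eq_sq₀ (norm_nonneg _) (norm_nonneg _)).mp this

/-- `‖[[A, B],[B, A]]‖_α = ‖diag(A - B, A + B)‖_α`. -/
theorem alphaNorm_symmetric_block (α : ℝ) (hα0 : 0 ≤ α) (hα1 : α ≤ 1) (A B : H →L[ℂ] H)
    (T S : WithLp 2 (H × H) →L[ℂ] WithLp 2 (H × H))
    (hT : ∀ x y : H, T (pr x y) = pr (A x + B y) (B x + A y))
    (hS : ∀ x y : H, S (pr x y) = pr ((A - B) x) ((A + B) y)) :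
    alphaNorm α T = alphaNorm α S := by
  unfold alphaNorm
  congr 1
  ext r
  constructor
  · rintro ⟨z, hz, rfl⟩
    obtain ⟨x, y, rfl⟩ : ∃ x y : H, z = pr x y :=
      ⟨(WithLp.equiv 2 (H × H) z).1, (WithLp.equiv 2 (H × H) z).2, rfl⟩
    set p := A x + B y
    set q := B x + A y
    refine ⟨pr (cc • (x - y)) (cc • (x + y)), by rw [norm_key]; exact hz, ?_⟩
    have hSw : S (pr (cc • (x - y)) (cc • (x + y))) = pr (cc • (p - q)) (cc • (p + q)) := by
      rw [hS]
      have h1 : (A - B) (cc • (x - y)) = cc • (p - q) := by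
        simp only [ContinuousLinearMap.sub_apply, map_smul, map_sub, p, q, ← smul_sub]
        congr 1; abel
      have h2 : (A + B) (cc • (x + y)) = cc • (p + q) := by
        simp only [ContinuousLinearMap.add_apply, map_smul, map_add, p, q, ← smul_add]
        congr 1; abel
      rw [h1, h2]
    rw [hSw, hT, inner_key, norm_key]
  · rintro ⟨z, hz, rfl⟩
    obtain ⟨x, y, rfl⟩ : ∃ x y : H, z = pr x y :=
      ⟨(WithLp.equiv 2 (H × H) z).1, (WithLp.equiv 2 (H × H) z).2, rfl⟩
    set a := cc • (x + y) with ha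
    set b := cc • (y - x) with hb
    have hx : cc • (a - b) = x := by
      rw [ha, hb, ← smul_sub, smul_smul, cc_mul_cc]
      have : (x + y) - (y - x) = x + x := by abel
      rw [this, ← two_smul ℂ x, smul_smul]
      norm_num
    have hy : cc • (a + b) = y := by
      rw [ha, hb, ← smul_add, smul_smul, cc_mul_cc]
      have : (x + y) + (y - x) = y + y := by abel
      rw [this, ← two_smul ℂ y, smul_smul]
      norm_num
    set p := A a + B b
    set q := B a + A b
    refine ⟨pr a b, ?_, ?_⟩
    · rw [← norm_key a b, hx, hy]; exact hz
    · have hSz : S (pr x y) = pr (cc • (p - q)) (cc • (p + q)) := by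
        rw [hS]
        have h1 : (A - B) x = cc • (p - q) := by
          rw [← hx]
          simp only [ContinuousLinearMap.sub_apply, map_smul, ← smul_sub]
          congr 1
          simp only [map_sub, p, q]; abel
        have h2 : (A + B) y = cc • (p + q) := by
          rw [← hy]
          simp only [ContinuousLinearMap.add_apply, map_smul, ← smul_add]
          congr 1
          simp only [map_add, p, q]; abel
        rw [h1, h2]
      have hxy : pr x y = pr (cc • (a - b)) (cc • (a + b)) := by rw [hx, hy]
      rw [hSz, hT, hxy, inner_key, norm_key]
end

section
/- For X, Y ∈ B(H) and T = diag(X, Y) on H ⊕ H, ‖T‖_α ≤ √(2)·max{‖X‖_α, ‖Y‖_α}. -/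
open scoped Matrix

variable {H : Type*} [NormedAddCommGroup H] [InnerProductSpace ℂ H]

lemma alphaNorm_bddAbove (α : ℝ) (hα0 : 0 ≤ α) (hα1 : α ≤ 1) (X : H →L[ℂ] H) :
    BddAbove {r : ℝ | ∃ x : H, ‖x‖ = 1 ∧
      r = Real.sqrt (α * ‖(inner ℂ (X x) x : ℂ)‖ ^ 2 + (1 - α) * ‖X x‖ ^ 2)} := by
  refine ⟨‖X‖, ?_⟩
  rintro r ⟨x, hx, rfl⟩
  have h1 : ‖(inner ℂ (X x) x : ℂ)‖ ≤ ‖X x‖ := by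
    calc ‖(inner ℂ (X x) x : ℂ)‖ ≤ ‖X x‖ * ‖x‖ := norm_inner_le_norm _ _
    _ = ‖X x‖ := by rw [hx, mul_one]
  have h2 : ‖X x‖ ≤ ‖X‖ := by
    calc ‖X x‖ ≤ ‖X‖ * ‖x‖ := X.le_opNorm x
    _ = ‖X‖ := by rw [hx, mul_one]
  have : α * ‖(inner ℂ (X x) x : ℂ)‖ ^ 2 + (1 - α) * ‖X x‖ ^ 2 ≤ ‖X‖ ^ 2 := by
    have i1 : ‖(inner ℂ (X x) x : ℂ)‖ ^ 2 ≤ ‖X‖ ^ 2 :=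
      pow_le_pow_left₀ (norm_nonneg _) (h1.trans h2) 2
    have i2 : ‖X x‖ ^ 2 ≤ ‖X‖ ^ 2 := pow_le_pow_left₀ (norm_nonneg _) h2 2
    nlinarith
  calc Real.sqrt _ ≤ Real.sqrt (‖X‖ ^ 2) := Real.sqrt_le_sqrt this
  _ = ‖X‖ := Real.sqrt_sq (norm_nonneg _)

lemma alphaNorm_nonneg (α : ℝ) (X : H →L[ℂ] H) : 0 ≤ alphaNorm α X :=
  Real.sSup_nonneg (by rintro r ⟨x, hx, rfl⟩; exact Real.sqrt_nonneg _)

lemma key (α : ℝ) (hα0 : 0 ≤ α) (hα1 : α ≤ 1) (X : H →L[ℂ] H) (x : H) (hx1 : ‖x‖ ≤ 1) :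
    α * ‖(inner ℂ (X x) x : ℂ)‖ ^ 2 + (1 - α) * ‖X x‖ ^ 2 ≤ ‖x‖ ^ 2 * (alphaNorm α X) ^ 2 := by
  rcases eq_or_ne x 0 with rfl | hx
  · simp
  · set a := ‖x‖ with ha
    have ha0 : 0 < a := norm_pos_iff.mpr hx
    set u := (a⁻¹ : ℂ) • x with hu
    have hun : ‖u‖ = 1 := by
      rw [hu, norm_smul]
      simp [ha0.ne', abs_of_pos ha0]
      exact inv_mul_cancel₀ ha0.ne'
    have hle : Real.sqrt (α * ‖(inner ℂ (X u) u : ℂ)‖ ^ 2 + (1 - α) * ‖X u‖ ^ 2)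
        ≤ alphaNorm α X :=
      le_csSup (alphaNorm_bddAbove α hα0 hα1 X) ⟨u, hun, rfl⟩
    have hsq : α * ‖(inner ℂ (X u) u : ℂ)‖ ^ 2 + (1 - α) * ‖X u‖ ^ 2 ≤ (alphaNorm α X) ^ 2 := by
      have h0 : 0 ≤ α * ‖(inner ℂ (X u) u : ℂ)‖ ^ 2 + (1 - α) * ‖X u‖ ^ 2 := by
        have := sq_nonneg ‖(inner ℂ (X u) u : ℂ)‖
        have := sq_nonneg ‖X u‖
        nlinarith
      have := Real.sq_sqrt h0
      nlinarith [Real.sqrt_nonneg (α * ‖(inner ℂ (X u) u : ℂ)‖ ^ 2 + (1 - α) * ‖X u‖ ^ 2),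
        alphaNorm_nonneg α X]
    have hXu : X u = (a⁻¹ : ℂ) • X x := by rw [hu, map_smul]
    have hnXu : ‖X u‖ = a⁻¹ * ‖X x‖ := by
      rw [hXu, norm_smul]; simp [abs_of_pos ha0]
    have hiu : ‖(inner ℂ (X u) u : ℂ)‖ = a⁻¹ * a⁻¹ * ‖(inner ℂ (X x) x : ℂ)‖ := by
      rw [hXu, hu, inner_smul_left, inner_smul_right]
      simp only [norm_mul, norm_inv, RCLike.norm_conj, Complex.norm_real,
        Real.norm_eq_abs, abs_of_pos ha0]
      ring
    have hiux : ‖(inner ℂ (X u) u : ℂ)‖ ^ 2 = (a⁻¹)^4 * ‖(inner ℂ (X x) x : ℂ)‖ ^ 2 := by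
      rw [hiu]; ring
    have hnux : ‖X u‖ ^ 2 = (a⁻¹)^2 * ‖X x‖ ^ 2 := by rw [hnXu]; ring
    rw [hiux, hnux] at hsq
    have ha2 : (0:ℝ) < a ^ 2 := by positivity
    have hc2 : (1:ℝ) ≤ (a⁻¹)^2 := one_le_pow₀ (one_le_inv₀ ha0 |>.mpr hx1)
    have e1 : a^2 * (α * ((a⁻¹)^4 * ‖(inner ℂ (X x) x : ℂ)‖^2)
        + (1 - α) * ((a⁻¹)^2 * ‖X x‖^2))
        = α * ((a⁻¹)^2 * ‖(inner ℂ (X x) x : ℂ)‖^2) + (1 - α) * ‖X x‖^2 := by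
      field_simp
    calc α * ‖(inner ℂ (X x) x : ℂ)‖ ^ 2 + (1 - α) * ‖X x‖ ^ 2
        ≤ α * ((a⁻¹)^2 * ‖(inner ℂ (X x) x : ℂ)‖^2) + (1 - α) * ‖X x‖^2 := by
          nlinarith [mul_nonneg hα0 (mul_nonneg (sub_nonneg.mpr hc2) (sq_nonneg ‖(inner ℂ (X x) x : ℂ)‖))]
      _ = a^2 * (α * ((a⁻¹)^4 * ‖(inner ℂ (X x) x : ℂ)‖^2)
            + (1 - α) * ((a⁻¹)^2 * ‖X x‖^2)) := e1.symm
      _ ≤ a^2 * (alphaNorm α X)^2 := mul_le_mul_of_nonneg_left hsq ha2.le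

set_option maxHeartbeats 1000000 in
/-- `‖diag(X, Y)‖_α ≤ √2 · max{‖X‖_α, ‖Y‖_α}`. -/
theorem alphaNorm_diag_sqrt_two (α : ℝ) (hα0 : 0 ≤ α) (hα1 : α ≤ 1) (X Y : H →L[ℂ] H)
    (T : WithLp 2 (H × H) →L[ℂ] WithLp 2 (H × H))
    (hT : ∀ x y : H, T (pr x y) = pr (X x) (Y y)) :
    alphaNorm α T ≤ Real.sqrt 2 * max (alphaNorm α X) (alphaNorm α Y) := by
  set M := max (alphaNorm α X) (alphaNorm α Y) with hM
  have hM0 : 0 ≤ M := le_trans (alphaNorm_nonneg α X) (le_max_left _ _)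
  have hMX2 : (alphaNorm α X) ^ 2 ≤ M ^ 2 :=
    pow_le_pow_left₀ (alphaNorm_nonneg α X) (le_max_left _ _) 2
  have hMY2 : (alphaNorm α Y) ^ 2 ≤ M ^ 2 :=
    pow_le_pow_left₀ (alphaNorm_nonneg α Y) (le_max_right _ _) 2
  apply Real.sSup_le
  · rintro r ⟨z, hz, rfl⟩
    have hzz : pr z.fst z.snd = z := rfl
    have hTz : T z = pr (X z.fst) (Y z.snd) := by
      have h := hT z.fst z.snd
      rwa [hzz] at h
    have ieq : (inner ℂ (T z) z : ℂ) = inner ℂ (X z.fst) z.fst + inner ℂ (Y z.snd) z.snd := by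
      rw [hTz]; rfl
    have neq : ‖T z‖ ^ 2 = ‖X z.fst‖ ^ 2 + ‖Y z.snd‖ ^ 2 := by
      rw [hTz]; exact WithLp.prod_norm_sq_eq_of_L2 _
    have hz2 : ‖z.fst‖ ^ 2 + ‖z.snd‖ ^ 2 = 1 := by
      have := WithLp.prod_norm_sq_eq_of_L2 z
      rw [hz] at this; simpa using this.symm
    have hx1 : ‖z.fst‖ ≤ 1 := by nlinarith [norm_nonneg z.fst, sq_nonneg ‖z.snd‖]
    have hy1 : ‖z.snd‖ ≤ 1 := by nlinarith [norm_nonneg z.snd, sq_nonneg ‖z.fst‖]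
    have hXb := key α hα0 hα1 X z.fst hx1
    have hYb := key α hα0 hα1 Y z.snd hy1
    have hI : ‖(inner ℂ (T z) z : ℂ)‖ ≤ ‖(inner ℂ (X z.fst) z.fst : ℂ)‖
        + ‖(inner ℂ (Y z.snd) z.snd : ℂ)‖ := by rw [ieq]; exact norm_add_le _ _
    have h1 : ‖(inner ℂ (T z) z : ℂ)‖ ^ 2 ≤ (‖(inner ℂ (X z.fst) z.fst : ℂ)‖
        + ‖(inner ℂ (Y z.snd) z.snd : ℂ)‖) ^ 2 :=
      pow_le_pow_left₀ (norm_nonneg _) hI 2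
    have h2 : (‖(inner ℂ (X z.fst) z.fst : ℂ)‖ + ‖(inner ℂ (Y z.snd) z.snd : ℂ)‖) ^ 2
        ≤ 2 * ‖(inner ℂ (X z.fst) z.fst : ℂ)‖ ^ 2 + 2 * ‖(inner ℂ (Y z.snd) z.snd : ℂ)‖ ^ 2 := by
      nlinarith [sq_nonneg (‖(inner ℂ (X z.fst) z.fst : ℂ)‖ - ‖(inner ℂ (Y z.snd) z.snd : ℂ)‖)]
    have h3 : α * ‖(inner ℂ (T z) z : ℂ)‖ ^ 2
        ≤ α * (2 * ‖(inner ℂ (X z.fst) z.fst : ℂ)‖ ^ 2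
          + 2 * ‖(inner ℂ (Y z.snd) z.snd : ℂ)‖ ^ 2) :=
      mul_le_mul_of_nonneg_left (h1.trans h2) hα0
    have h4 : ‖z.fst‖ ^ 2 * M ^ 2 + ‖z.snd‖ ^ 2 * M ^ 2 = M ^ 2 := by
      linear_combination (M ^ 2) * hz2
    have hmain : α * ‖(inner ℂ (T z) z : ℂ)‖ ^ 2 + (1 - α) * ‖T z‖ ^ 2 ≤ 2 * M ^ 2 := by
      rw [neq]
      have n1 : 0 ≤ (1 - α) * ‖X z.fst‖ ^ 2 :=
        mul_nonneg (by linarith) (sq_nonneg _)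
      have n2 : 0 ≤ (1 - α) * ‖Y z.snd‖ ^ 2 :=
        mul_nonneg (by linarith) (sq_nonneg _)
      have m1 := mul_le_mul_of_nonneg_left hMX2 (sq_nonneg ‖z.fst‖)
      have m2 := mul_le_mul_of_nonneg_left hMY2 (sq_nonneg ‖z.snd‖)
      nlinarith [hXb, hYb]
    calc Real.sqrt (α * ‖(inner ℂ (T z) z : ℂ)‖ ^ 2 + (1 - α) * ‖T z‖ ^ 2)
        ≤ Real.sqrt (2 * M ^ 2) := Real.sqrt_le_sqrt hmain
      _ = Real.sqrt 2 * M := by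
          rw [Real.sqrt_mul (by norm_num), Real.sqrt_sq hM0]
  · positivity
end

section
/- Let T = (T_ij) be an n×n operator matrix with T_ij ∈ B(H), and let f, g be nonnegative continuous functions on [0,∞) with f(t)g(t) = t for all t ≥ 0. Let R = (r_ij) with r_ij = (‖f²(|T_ij|)‖^{1/2}‖g²(|T_ij*|)‖^{1/2} + ‖f²(|T_ji|)‖^{1/2}‖g²(|T_ji*|)‖^{1/2})/2, and S = (‖T_ij‖). Then for α ∈ [0,1], ‖T‖_α ≤ √(‖α|R|² + (1−α)|S|²‖). -/
open scoped Matrix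

/-- The modulus `|A| = (A*A)^{1/2}` of a bounded operator, via the continuous functional
calculus. -/
noncomputable def absOp {H : Type*} [NormedAddCommGroup H] [InnerProductSpace ℂ H]
    [CompleteSpace H] (A : H →L[ℂ] H) : H →L[ℂ] H :=
  cfc Real.sqrt (ContinuousLinearMap.adjoint A * A)

section key

variable {H : Type*} [NormedAddCommGroup H] [InnerProductSpace ℂ H] [CompleteSpace H]

lemma absOp_nonneg (A : H →L[ℂ] H) : 0 ≤ absOp A := by
  have h : (0 : H →L[ℂ] H) ≤ ContinuousLinearMap.adjoint A * A := by
    rw [← ContinuousLinearMap.star_eq_adjoint]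
    exact star_mul_self_nonneg A
  exact cfc_nonneg (fun t _ => Real.sqrt_nonneg t)

lemma absOp_sq (A : H →L[ℂ] H) : (absOp A) ^ 2 = ContinuousLinearMap.adjoint A * A := by
  have h : (0 : H →L[ℂ] H) ≤ ContinuousLinearMap.adjoint A * A := by
    rw [← ContinuousLinearMap.star_eq_adjoint]; exact star_mul_self_nonneg A
  rw [absOp, sq, ← cfc_mul _ _ _ (Real.continuous_sqrt.continuousOn) (Real.continuous_sqrt.continuousOn)]
  calc cfc (fun t => Real.sqrt t * Real.sqrt t) (ContinuousLinearMap.adjoint A * A)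
      = cfc (id : ℝ → ℝ) (ContinuousLinearMap.adjoint A * A) := by
        apply cfc_congr
        intro t ht
        have : 0 ≤ t := spectrum_nonneg_of_nonneg h ht
        simp [Real.mul_self_sqrt this]
    _ = _ := cfc_id ℝ _

lemma norm_absOp (A : H →L[ℂ] H) : ‖absOp A‖ = ‖A‖ := by
  have h1 : IsSelfAdjoint (absOp A) := IsSelfAdjoint.of_nonneg (absOp_nonneg A)
  have h2 : ‖absOp A‖ ^ 2 = ‖A‖ ^ 2 := by
    calc ‖absOp A‖ ^ 2 = ‖absOp A ^ 2‖ := by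
          rw [sq (absOp A)]
          nth_rewrite 2 [← h1.star_eq]
          rw [CStarRing.norm_star_mul_self, ← sq]
      _ = ‖ContinuousLinearMap.adjoint A * A‖ := by rw [absOp_sq]
      _ = ‖A‖ ^ 2 := by
          rw [← ContinuousLinearMap.star_eq_adjoint, CStarRing.norm_star_mul_self, sq]
  calc ‖absOp A‖ = Real.sqrt (‖absOp A‖ ^ 2) := (Real.sqrt_sq (norm_nonneg _)).symm
    _ = Real.sqrt (‖A‖ ^ 2) := by rw [h2]
    _ = ‖A‖ := Real.sqrt_sq (norm_nonneg _)

lemma spectrum_absOp_subset (A : H →L[ℂ] H) : spectrum ℝ (absOp A) ⊆ Set.Ici 0 :=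
  fun _ ht => spectrum_nonneg_of_nonneg (absOp_nonneg A) ht

lemma key_norm_le (f g : ℝ → ℝ) (hf : ContinuousOn f (Set.Ici 0))
    (hg : ContinuousOn g (Set.Ici 0))
    (hf0 : ∀ t ∈ Set.Ici (0 : ℝ), 0 ≤ f t) (hg0 : ∀ t ∈ Set.Ici (0 : ℝ), 0 ≤ g t)
    (hfg : ∀ t ∈ Set.Ici (0 : ℝ), f t * g t = t) (A : H →L[ℂ] H) :
    ‖A‖ ≤ Real.sqrt ‖(cfc f (absOp A)) ^ 2‖ *
      Real.sqrt ‖(cfc g (absOp (ContinuousLinearMap.adjoint A))) ^ 2‖ := by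
  rcases eq_or_ne A 0 with rfl | hA
  · simp only [norm_zero]
    positivity
  · have : Nontrivial (H →L[ℂ] H) := nontrivial_of_ne A 0 hA
    have hsaf : IsSelfAdjoint (cfc f (absOp A)) := cfc_predicate f (absOp A)
    have hsag : IsSelfAdjoint (cfc g (absOp (ContinuousLinearMap.adjoint A))) :=
      cfc_predicate g _
    have hnf : Real.sqrt ‖(cfc f (absOp A)) ^ 2‖ = ‖cfc f (absOp A)‖ := by
      rw [sq (cfc f (absOp A))]
      nth_rewrite 1 [← hsaf.star_eq]
      rw [CStarRing.norm_star_mul_self, Real.sqrt_mul_self (norm_nonneg _)]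
    have hng : Real.sqrt ‖(cfc g (absOp (ContinuousLinearMap.adjoint A))) ^ 2‖ =
        ‖cfc g (absOp (ContinuousLinearMap.adjoint A))‖ := by
      rw [sq (cfc g (absOp (ContinuousLinearMap.adjoint A)))]
      nth_rewrite 1 [← hsag.star_eq]
      rw [CStarRing.norm_star_mul_self, Real.sqrt_mul_self (norm_nonneg _)]
    rw [hnf, hng]
    have hmemf : ‖A‖ ∈ spectrum ℝ (absOp A) := by
      rw [← norm_absOp A]
      exact CStarAlgebra.norm_mem_spectrum_of_nonneg (absOp_nonneg A)
    have hmemg : ‖A‖ ∈ spectrum ℝ (absOp (ContinuousLinearMap.adjoint A)) := by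
      have : ‖A‖ = ‖absOp (ContinuousLinearMap.adjoint A)‖ := by
        rw [norm_absOp, ← ContinuousLinearMap.star_eq_adjoint, norm_star]
      rw [this]
      exact CStarAlgebra.norm_mem_spectrum_of_nonneg (absOp_nonneg _)
    have hbf : f ‖A‖ ≤ ‖cfc f (absOp A)‖ := by
      refine le_trans (le_abs_self _) ?_
      exact norm_apply_le_norm_cfc f (absOp A) hmemf
        (hf.mono (spectrum_absOp_subset A)) (IsSelfAdjoint.of_nonneg (absOp_nonneg A))
    have hbg : g ‖A‖ ≤ ‖cfc g (absOp (ContinuousLinearMap.adjoint A))‖ := by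
      refine le_trans (le_abs_self _) ?_
      exact norm_apply_le_norm_cfc g _ hmemg
        (hg.mono (spectrum_absOp_subset _)) (IsSelfAdjoint.of_nonneg (absOp_nonneg _))
    calc ‖A‖ = f ‖A‖ * g ‖A‖ := (hfg ‖A‖ (norm_nonneg A)).symm
      _ ≤ _ := mul_le_mul hbf hbg (hg0 _ (norm_nonneg A)) (norm_nonneg _)


end key

/-- `‖T‖_α ≤ √(‖α|R|² + (1-α)|S|²‖)` where
`r_ij = (‖f²(|T_ij|)‖^{1/2}‖g²(|T_ij*|)‖^{1/2} + ‖f²(|T_ji|)‖^{1/2}‖g²(|T_ji*|)‖^{1/2})/2`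
and `s_ij = ‖T_ij‖`, for nonnegative continuous `f, g` on `[0,∞)` with `f(t)g(t) = t`. -/
theorem alphaNorm_opMatrix_fg_bound {n : ℕ} {H : Type*}
    [NormedAddCommGroup H] [InnerProductSpace ℂ H] [CompleteSpace H]
    (α : ℝ) (hα0 : 0 ≤ α) (hα1 : α ≤ 1)
    (f g : ℝ → ℝ) (hf : ContinuousOn f (Set.Ici 0)) (hg : ContinuousOn g (Set.Ici 0))
    (hf0 : ∀ t ∈ Set.Ici (0 : ℝ), 0 ≤ f t) (hg0 : ∀ t ∈ Set.Ici (0 : ℝ), 0 ≤ g t)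
    (hfg : ∀ t ∈ Set.Ici (0 : ℝ), f t * g t = t)
    (Tij : ∀ _ _ : Fin n, H →L[ℂ] H)
    (T : PiLp 2 (fun _ : Fin n => H) →L[ℂ] PiLp 2 (fun _ : Fin n => H))
    (hT : ∀ (x : PiLp 2 (fun _ : Fin n => H)) (i : Fin n), T x i = ∑ j, Tij i j (x j))
    (R S : Matrix (Fin n) (Fin n) ℝ)
    (hR : ∀ i j, R i j =
      (Real.sqrt ‖(cfc f (absOp (Tij i j))) ^ 2‖ *
          Real.sqrt ‖(cfc g (absOp (ContinuousLinearMap.adjoint (Tij i j)))) ^ 2‖ +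
        Real.sqrt ‖(cfc f (absOp (Tij j i))) ^ 2‖ *
          Real.sqrt ‖(cfc g (absOp (ContinuousLinearMap.adjoint (Tij j i)))) ^ 2‖) / 2)
    (hS : ∀ i j, S i j = ‖Tij i j‖) :
    alphaNorm α T ≤ Real.sqrt ‖Matrix.toEuclideanCLM (𝕜 := ℂ)
      ((α : ℂ) • ((R.map Complex.ofReal)ᴴ * R.map Complex.ofReal) +
        ((1 - α : ℝ) : ℂ) • ((S.map Complex.ofReal)ᴴ * S.map Complex.ofReal))‖ := by
  classical
  set M : EuclideanSpace ℂ (Fin n) →L[ℂ] EuclideanSpace ℂ (Fin n) :=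
    Matrix.toEuclideanCLM (𝕜 := ℂ)
      ((α : ℂ) • ((R.map Complex.ofReal)ᴴ * R.map Complex.ofReal) +
        ((1 - α : ℝ) : ℂ) • ((S.map Complex.ofReal)ᴴ * S.map Complex.ofReal)) with hM
  rw [alphaNorm]
  refine Real.sSup_le ?_ (Real.sqrt_nonneg _)
  rintro r ⟨x, hx, rfl⟩
  refine Real.sqrt_le_sqrt ?_
  -- notation
  set u : Fin n → ℝ := fun i => ‖x i‖ with hu
  have hu0 : ∀ i, 0 ≤ u i := fun i => norm_nonneg _
  have husq : ∑ i, u i ^ 2 = 1 := by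
    have h := PiLp.norm_sq_eq_of_L2 (fun _ : Fin n => H) x
    rw [hx] at h
    simpa [hu] using h.symm
  set c : Fin n → Fin n → ℝ := fun i j =>
    Real.sqrt ‖(cfc f (absOp (Tij i j))) ^ 2‖ *
      Real.sqrt ‖(cfc g (absOp (ContinuousLinearMap.adjoint (Tij i j)))) ^ 2‖ with hcdef
  have hRc : ∀ i j, R i j = (c i j + c j i) / 2 := hR
  have hcT : ∀ i j, ‖Tij i j‖ ≤ c i j := fun i j =>
    key_norm_le f g hf hg hf0 hg0 hfg (Tij i j)
  set Ru : Fin n → ℝ := fun i => ∑ j, R i j * u j with hRu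
  set Su : Fin n → ℝ := fun i => ∑ j, S i j * u j with hSu
  -- Step A : numerical bound
  have hA1 : ‖(inner ℂ (T x) x : ℂ)‖ ≤ ∑ i, ∑ j, c i j * (u i * u j) := by
    have hexp : (inner ℂ (T x) x : ℂ) = ∑ i, ∑ j, (inner ℂ (Tij i j (x j)) (x i) : ℂ) := by
      rw [PiLp.inner_apply]
      refine Finset.sum_congr rfl fun i _ => ?_
      rw [hT x i, sum_inner]
    rw [hexp]
    refine le_trans (norm_sum_le _ _) (Finset.sum_le_sum fun i _ => ?_)
    refine le_trans (norm_sum_le _ _) (Finset.sum_le_sum fun j _ => ?_)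
    calc ‖(inner ℂ (Tij i j (x j)) (x i) : ℂ)‖ ≤ ‖Tij i j (x j)‖ * ‖x i‖ :=
          norm_inner_le_norm _ _
      _ ≤ (‖Tij i j‖ * ‖x j‖) * ‖x i‖ := by
          gcongr
          exact (Tij i j).le_opNorm _
      _ ≤ c i j * (u i * u j) := by
          have hui : u i = ‖x i‖ := rfl
          have huj : u j = ‖x j‖ := rfl
          rw [hui, huj]
          have h3 := hcT i j
          have h1 : (0:ℝ) ≤ ‖x j‖ := norm_nonneg _
          have h2 : (0:ℝ) ≤ ‖x i‖ := norm_nonneg _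
          calc ‖Tij i j‖ * ‖x j‖ * ‖x i‖ ≤ c i j * ‖x j‖ * ‖x i‖ :=
                mul_le_mul_of_nonneg_right (mul_le_mul_of_nonneg_right h3 h1) h2
            _ = c i j * (‖x i‖ * ‖x j‖) := by ring
  have hswap : ∑ i, ∑ j, c j i * (u i * u j) = ∑ i, ∑ j, c i j * (u i * u j) := by
    rw [Finset.sum_comm]
    exact Finset.sum_congr rfl fun i _ => Finset.sum_congr rfl fun j _ => by ring
  have hsym : ∑ i, ∑ j, c i j * (u i * u j) = ∑ i, ∑ j, R i j * (u i * u j) := by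
    calc ∑ i, ∑ j, c i j * (u i * u j)
        = ((∑ i, ∑ j, c i j * (u i * u j)) + ∑ i, ∑ j, c j i * (u i * u j)) / 2 := by
          rw [hswap]; ring
      _ = ∑ i, ∑ j, (c i j * (u i * u j) + c j i * (u i * u j)) / 2 := by
          simp_rw [div_eq_mul_inv, ← Finset.sum_mul, Finset.sum_add_distrib]
      _ = ∑ i, ∑ j, R i j * (u i * u j) := by
          refine Finset.sum_congr rfl fun i _ => Finset.sum_congr rfl fun j _ => ?_
          rw [hRc i j]; ring
  have hA2 : ‖(inner ℂ (T x) x : ℂ)‖ ≤ ∑ i, Ru i * u i := by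
    refine le_trans hA1 (le_of_eq ?_)
    rw [hsym, hRu]
    refine Finset.sum_congr rfl fun i _ => ?_
    simp only [Finset.sum_mul]
    exact Finset.sum_congr rfl fun j _ => by ring
  have hA3 : ‖(inner ℂ (T x) x : ℂ)‖ ^ 2 ≤ ∑ i, Ru i ^ 2 := by
    have h0 : (0:ℝ) ≤ ‖(inner ℂ (T x) x : ℂ)‖ := norm_nonneg _
    calc ‖(inner ℂ (T x) x : ℂ)‖ ^ 2 ≤ (∑ i, Ru i * u i) ^ 2 := by
          exact pow_le_pow_left₀ h0 hA2 2
      _ ≤ (∑ i, Ru i ^ 2) * ∑ i, u i ^ 2 :=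
          Finset.sum_mul_sq_le_sq_mul_sq _ _ _
      _ = ∑ i, Ru i ^ 2 := by rw [husq, mul_one]
  -- Step B : norm bound
  have hB : ‖T x‖ ^ 2 ≤ ∑ i, Su i ^ 2 := by
    rw [PiLp.norm_sq_eq_of_L2]
    refine Finset.sum_le_sum fun i _ => ?_
    have hb : ‖T x i‖ ≤ Su i := by
      rw [hT x i, hSu]
      refine le_trans (norm_sum_le _ _) (Finset.sum_le_sum fun j _ => ?_)
      calc ‖Tij i j (x j)‖ ≤ ‖Tij i j‖ * ‖x j‖ := (Tij i j).le_opNorm _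
        _ = S i j * u j := by rw [hS i j]
    exact pow_le_pow_left₀ (norm_nonneg _) hb 2
  -- the Euclidean vector
  set v : EuclideanSpace ℂ (Fin n) := (WithLp.equiv 2 _).symm (fun i => (u i : ℂ)) with hv
  have hvnorm : ‖v‖ = 1 := by
    have h2 : ‖v‖ ^ 2 = 1 := by
      rw [PiLp.norm_sq_eq_of_L2]
      rw [← husq]
      refine Finset.sum_congr rfl fun i _ => ?_
      simp [hv, WithLp.equiv_symm_apply, sq_abs]
    calc ‖v‖ = Real.sqrt (‖v‖ ^ 2) := (Real.sqrt_sq (norm_nonneg _)).symm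
      _ = 1 := by rw [h2, Real.sqrt_one]
  set P : EuclideanSpace ℂ (Fin n) →L[ℂ] EuclideanSpace ℂ (Fin n) :=
    Matrix.toEuclideanCLM (𝕜 := ℂ) (R.map Complex.ofReal) with hP
  set Q : EuclideanSpace ℂ (Fin n) →L[ℂ] EuclideanSpace ℂ (Fin n) :=
    Matrix.toEuclideanCLM (𝕜 := ℂ) (S.map Complex.ofReal) with hQ
  have hMPQ : M = (α : ℂ) • (star P * P) + ((1 - α : ℝ) : ℂ) • (star Q * Q) := by
    rw [hM, hP, hQ, ← Matrix.star_eq_conjTranspose, ← Matrix.star_eq_conjTranspose]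
    simp only [map_add, map_smul, map_mul, map_star]
  have hPapp : ∀ (A : Matrix (Fin n) (Fin n) ℝ) (i : Fin n),
      (Matrix.toEuclideanCLM (𝕜 := ℂ) (A.map Complex.ofReal)) v i
        = ((∑ j, A i j * u j : ℝ) : ℂ) := by
    intro A i
    have h := Matrix.ofLp_toEuclideanCLM (𝕜 := ℂ) (A.map Complex.ofReal) v
    have h2 := congrFun h i
    rw [h2]
    simp [Matrix.mulVec, dotProduct, hv, WithLp.equiv_symm_apply]
  have hPnorm : ‖P v‖ ^ 2 = ∑ i, Ru i ^ 2 := by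
    rw [PiLp.norm_sq_eq_of_L2]
    refine Finset.sum_congr rfl fun i _ => ?_
    rw [hP, hPapp R i, Complex.norm_real, Real.norm_eq_abs, sq_abs]
  have hQnorm : ‖Q v‖ ^ 2 = ∑ i, Su i ^ 2 := by
    rw [PiLp.norm_sq_eq_of_L2]
    refine Finset.sum_congr rfl fun i _ => ?_
    rw [hQ, hPapp S i, Complex.norm_real, Real.norm_eq_abs, sq_abs]
  have hinner : (inner ℂ v (M v) : ℂ) = ((α * ∑ i, Ru i ^ 2 + (1 - α) * ∑ i, Su i ^ 2 : ℝ) : ℂ) := by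
    rw [hMPQ]
    simp only [ContinuousLinearMap.add_apply, ContinuousLinearMap.coe_smul', Pi.smul_apply,
      inner_add_right, inner_smul_right, ContinuousLinearMap.mul_apply,
      ContinuousLinearMap.star_eq_adjoint, ContinuousLinearMap.adjoint_inner_right,
      inner_self_eq_norm_sq_to_K]
    rw [← hPnorm, ← hQnorm]
    push_cast
    ring_nf
    rfl
  have hval0 : (0:ℝ) ≤ α * ∑ i, Ru i ^ 2 + (1 - α) * ∑ i, Su i ^ 2 := by
    have h1 : (0:ℝ) ≤ ∑ i, Ru i ^ 2 := Finset.sum_nonneg fun i _ => sq_nonneg _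
    have h2 : (0:ℝ) ≤ ∑ i, Su i ^ 2 := Finset.sum_nonneg fun i _ => sq_nonneg _
    have h3 : (0:ℝ) ≤ 1 - α := by linarith
    exact add_nonneg (mul_nonneg hα0 h1) (mul_nonneg h3 h2)
  have hfinal : α * ∑ i, Ru i ^ 2 + (1 - α) * ∑ i, Su i ^ 2 ≤ ‖M‖ := by
    calc α * ∑ i, Ru i ^ 2 + (1 - α) * ∑ i, Su i ^ 2
        = ‖((α * ∑ i, Ru i ^ 2 + (1 - α) * ∑ i, Su i ^ 2 : ℝ) : ℂ)‖ := by
          rw [Complex.norm_real, Real.norm_eq_abs, abs_of_nonneg hval0]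
      _ = ‖(inner ℂ v (M v) : ℂ)‖ := by rw [hinner]
      _ ≤ ‖v‖ * ‖M v‖ := norm_inner_le_norm _ _
      _ ≤ ‖v‖ * (‖M‖ * ‖v‖) := by
          gcongr
          exact M.le_opNorm v
      _ = ‖M‖ := by rw [hvnorm]; ring
  calc α * ‖(inner ℂ (T x) x : ℂ)‖ ^ 2 + (1 - α) * ‖T x‖ ^ 2
      ≤ α * ∑ i, Ru i ^ 2 + (1 - α) * ∑ i, Su i ^ 2 := by
        have h3 : (0:ℝ) ≤ 1 - α := by linarith
        exact add_le_add (mul_le_mul_of_nonneg_left hA3 hα0)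
          (mul_le_mul_of_nonneg_left hB h3)
    _ ≤ ‖M‖ := hfinal
end

section
/- Let T = (T_ij) be an n×n operator matrix with T_ij ∈ B(H) and f, g nonnegative continuous functions on [0,∞) with f(t)g(t) = t. Then the numerical radius satisfies w(T) ≤ w(T̃), where T̃ = (t̃_ij) is the n×n scalar matrix with t̃_ii = ‖f²(|T_ii|) + g²(|T_ii*|)‖/2 and t̃_ij = ‖f²(|T_ij|)‖^{1/2}‖g²(|T_ij*|)‖^{1/2} for i ≠ j. -/
open scoped Matrix

set_option maxHeartbeats 1000000

lemma mul_pow_comm' {A : Type*} [Monoid A] {a b c : A} (h : a * b = c * a) (k : ℕ) :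
    a * b ^ k = c ^ k * a := by
  induction k with
  | zero => simp
  | succ k ih => rw [pow_succ, ← mul_assoc, ih, mul_assoc, h, pow_succ, mul_assoc]

lemma aeval_comm' {A : Type*} [Ring A] [Algebra ℝ A] {a b c : A} (h : a * b = c * a)
    (p : Polynomial ℝ) : a * Polynomial.aeval b p = Polynomial.aeval c p * a := by
  induction p using Polynomial.induction_on with
  | C r => simp [Algebra.commutes]
  | add p q hp hq => simp [mul_add, add_mul, hp, hq]
  | monomial n r _ =>
    simp only [map_mul, map_pow, Polynomial.aeval_C, Polynomial.aeval_X]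
    rw [← mul_assoc, ← Algebra.commutes, mul_assoc, mul_pow_comm' h, ← mul_assoc]

open ContinuousLinearMap in
lemma cfc_comm_adjoint' {H : Type*} [NormedAddCommGroup H] [InnerProductSpace ℂ H]
    [CompleteSpace H] (a : H →L[ℂ] H) (φ : ℝ → ℝ) (hφ : ContinuousOn φ (Set.Ici 0)) :
    a * cfc φ (adjoint a * a) = cfc φ (a * adjoint a) * a := by
  rcases subsingleton_or_nontrivial H with hH | hH
  · exact Subsingleton.elim _ _
  rw [← star_eq_adjoint]
  set b := star a * a with hb_def
  set c := a * star a with hc_def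
  have hb : IsSelfAdjoint b := IsSelfAdjoint.star_mul_self a
  have hc : IsSelfAdjoint c := IsSelfAdjoint.mul_star_self a
  have hb0 : (0 : H →L[ℂ] H) ≤ b := star_mul_self_nonneg a
  have hc0 : (0 : H →L[ℂ] H) ≤ c := mul_star_self_nonneg a
  set M : ℝ := max ‖b‖ ‖c‖ with hM
  have hsb : spectrum ℝ b ⊆ Set.Icc 0 M := fun x hx =>
    ⟨spectrum_nonneg_of_nonneg hb0 hx,
      le_trans (le_trans (le_abs_self x) (spectrum.norm_le_norm_of_mem hx)) (le_max_left _ _)⟩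
  have hsc : spectrum ℝ c ⊆ Set.Icc 0 M := fun x hx =>
    ⟨spectrum_nonneg_of_nonneg hc0 hx,
      le_trans (le_trans (le_abs_self x) (spectrum.norm_le_norm_of_mem hx)) (le_max_right _ _)⟩
  have hsb' : spectrum ℝ b ⊆ Set.Ici 0 := hsb.trans (Set.Icc_subset_Ici_self)
  have hsc' : spectrum ℝ c ⊆ Set.Ici 0 := hsc.trans (Set.Icc_subset_Ici_self)
  have hφb : ContinuousOn φ (spectrum ℝ b) := hφ.mono hsb'
  have hφc : ContinuousOn φ (spectrum ℝ c) := hφ.mono hsc'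
  rw [← sub_eq_zero, ← norm_le_zero_iff]
  refine le_of_forall_pos_le_add fun ε hε => ?_
  rw [zero_add]
  set δ : ℝ := ε / (2 * ‖a‖ + 1) with hδdef
  have hδ : 0 < δ := by positivity
  obtain ⟨p, hp⟩ := exists_polynomial_near_of_continuousOn 0 M φ
    (hφ.mono (Set.Icc_subset_Ici_self)) δ hδ
  have hmid : a * cfc p.eval b = cfc p.eval c * a := by
    rw [cfc_polynomial p b hb, cfc_polynomial p c hc]
    exact aeval_comm' (by rw [hb_def, hc_def, mul_assoc]) p
  have hdb : ‖cfc φ b - cfc p.eval b‖ ≤ δ := by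
    rw [← cfc_sub φ p.eval b hφb (Polynomial.continuousOn _)]
    refine norm_cfc_le hδ.le fun x hx => ?_
    have := hp x (hsb hx)
    rw [Real.norm_eq_abs, abs_sub_comm]
    exact (le_of_lt this)
  have hdc : ‖cfc φ c - cfc p.eval c‖ ≤ δ := by
    rw [← cfc_sub φ p.eval c hφc (Polynomial.continuousOn _)]
    refine norm_cfc_le hδ.le fun x hx => ?_
    have := hp x (hsc hx)
    rw [Real.norm_eq_abs, abs_sub_comm]
    exact (le_of_lt this)
  have key : a * cfc φ b - cfc φ c * a
      = a * (cfc φ b - cfc p.eval b) + ((cfc p.eval c - cfc φ c) * a) := by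
    rw [mul_sub, sub_mul, hmid]; abel
  calc ‖a * cfc φ b - cfc φ c * a‖
      ≤ ‖a * (cfc φ b - cfc p.eval b)‖ + ‖(cfc p.eval c - cfc φ c) * a‖ := by
        rw [key]; exact norm_add_le _ _
    _ ≤ ‖a‖ * δ + δ * ‖a‖ := by
        refine add_le_add ((norm_mul_le _ _).trans ?_) ((norm_mul_le _ _).trans ?_)
        · exact mul_le_mul_of_nonneg_left hdb (norm_nonneg a)
        · rw [norm_sub_rev]; exact mul_le_mul_of_nonneg_right hdc (norm_nonneg a)
    _ ≤ ε := by
        have hA : (0:ℝ) ≤ ‖a‖ := norm_nonneg a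
        have h1 : (0:ℝ) < 2 * ‖a‖ + 1 := by positivity
        have h2 : δ * (2 * ‖a‖ + 1) = ε := div_mul_cancel₀ ε h1.ne'
        nlinarith [hδ.le]

open ContinuousLinearMap in
lemma mixed_schwarz' {H : Type*} [NormedAddCommGroup H] [InnerProductSpace ℂ H]
    [CompleteSpace H]
    (f g : ℝ → ℝ) (hf : ContinuousOn f (Set.Ici 0)) (hg : ContinuousOn g (Set.Ici 0))
    (hf0 : ∀ t ∈ Set.Ici (0:ℝ), 0 ≤ f t) (hg0 : ∀ t ∈ Set.Ici (0:ℝ), 0 ≤ g t)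
    (hfg : ∀ t ∈ Set.Ici (0:ℝ), f t * g t = t) (a : H →L[ℂ] H) (x y : H) :
    ‖(inner ℂ (a x) y : ℂ)‖ ≤ ‖cfc f (absOp a) x‖ * ‖cfc g (absOp (adjoint a)) y‖ := by
  have hb : IsSelfAdjoint (adjoint a * a) := by
    rw [← star_eq_adjoint]; exact IsSelfAdjoint.star_mul_self a
  have hc : IsSelfAdjoint (a * adjoint a) := by
    rw [← star_eq_adjoint]; exact IsSelfAdjoint.mul_star_self a
  have hb0 : (0 : H →L[ℂ] H) ≤ adjoint a * a := by
    rw [← star_eq_adjoint]; exact star_mul_self_nonneg a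
  have hc0 : (0 : H →L[ℂ] H) ≤ a * adjoint a := by
    rw [← star_eq_adjoint]; exact mul_star_self_nonneg a
  have hsb : spectrum ℝ (adjoint a * a) ⊆ Set.Ici 0 :=
    fun t ht => spectrum_nonneg_of_nonneg hb0 ht
  have hsc : spectrum ℝ (a * adjoint a) ⊆ Set.Ici 0 :=
    fun t ht => spectrum_nonneg_of_nonneg hc0 ht
  -- the composed functions
  set F : ℝ → ℝ := fun t => f (Real.sqrt t) with hFdef
  set G : ℝ → ℝ := fun t => g (Real.sqrt t) with hGdef
  have hF : Continuous F := by
    rw [← continuousOn_univ]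
    exact hf.comp Real.continuous_sqrt.continuousOn (fun t _ => Real.sqrt_nonneg t)
  have hG : Continuous G := by
    rw [← continuousOn_univ]
    exact hg.comp Real.continuous_sqrt.continuousOn (fun t _ => Real.sqrt_nonneg t)
  have hFnn : ∀ t, 0 ≤ F t := fun t => hf0 _ (Real.sqrt_nonneg t)
  have hGnn : ∀ t, 0 ≤ G t := fun t => hg0 _ (Real.sqrt_nonneg t)
  -- rewrite the cfc's
  have habs : cfc f (absOp a) = cfc F (adjoint a * a) := by
    rw [absOp, ← cfc_comp' f Real.sqrt (adjoint a * a)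
      (hf.mono (by rintro - ⟨t, -, rfl⟩; exact Real.sqrt_nonneg t))
      Real.continuous_sqrt.continuousOn hb]
  have habs' : cfc g (absOp (adjoint a)) = cfc G (a * adjoint a) := by
    rw [absOp, adjoint_adjoint, ← cfc_comp' g Real.sqrt (a * adjoint a)
      (hg.mono (by rintro - ⟨t, -, rfl⟩; exact Real.sqrt_nonneg t))
      Real.continuous_sqrt.continuousOn hc]
  rw [habs, habs']
  refine le_of_forall_pos_le_add fun η hη => ?_
  set Q : ℝ := ‖x‖ * ‖cfc G (a * adjoint a) y‖ with hQdef
  have hQ0 : 0 ≤ Q := by positivity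
  set ε : ℝ := η / (Q + 1) with hεdef
  have hε : 0 < ε := by positivity
  set k : ℝ → ℝ := fun t => F t + ε with hkdef
  set h : ℝ → ℝ := fun t => (F t + ε)⁻¹ with hhdef
  have hkpos : ∀ t, 0 < F t + ε := fun t => add_pos_of_nonneg_of_pos (hFnn t) hε
  have hkc : Continuous k := hF.add continuous_const
  have hhc : Continuous h := hkc.inv₀ (fun t => (hkpos t).ne')
  set B : H →L[ℂ] H := a * cfc h (adjoint a * a) with hBdef
  have ha_eq : a = B * cfc k (adjoint a * a) := by
    rw [hBdef, mul_assoc, ← cfc_mul h k _ hhc.continuousOn hkc.continuousOn]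
    have : cfc (fun t => h t * k t) (adjoint a * a) = (1 : H →L[ℂ] H) := by
      rw [cfc_congr (g := fun _ => (1:ℝ)) (fun t _ => inv_mul_cancel₀ (hkpos t).ne')]
      exact cfc_const_one ℝ _ hb
    rw [this, mul_one]
  -- step 1 : pull out
  have step1 : (inner ℂ (a x) y : ℂ) = inner ℂ (cfc k (adjoint a * a) x) (adjoint B y) := by
    conv_lhs => rw [ha_eq, ContinuousLinearMap.mul_apply]
    exact (adjoint_inner_right B _ y).symm
  -- bound on the k part
  have bound1 : ‖cfc k (adjoint a * a) x‖ ≤ ‖cfc F (adjoint a * a) x‖ + ε * ‖x‖ := by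
    have : cfc k (adjoint a * a)
        = cfc F (adjoint a * a) + algebraMap ℝ (H →L[ℂ] H) ε := by
      rw [← cfc_const ε (adjoint a * a) hb,
        ← cfc_add (adjoint a * a) F _ hF.continuousOn continuous_const.continuousOn]
    rw [this, ContinuousLinearMap.add_apply, Algebra.algebraMap_eq_smul_one, ContinuousLinearMap.smul_apply, ContinuousLinearMap.one_apply]
    refine (norm_add_le _ _).trans ?_
    rw [norm_smul, Real.norm_eq_abs, abs_of_pos hε]
  -- bound on the adjoint part
  have hsaB : IsSelfAdjoint (cfc h (adjoint a * a)) := cfc_predicate h _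
  have hadjB : adjoint B = cfc h (adjoint a * a) * adjoint a := by
    rw [hBdef, ← star_eq_adjoint, star_mul, hsaB.star_eq, star_eq_adjoint]
  have hS : B * adjoint B = cfc (fun t => h t * h t * t) (a * adjoint a) := by
    have e1 : B * adjoint B = a * cfc (fun t => h t * h t) (adjoint a * a) * adjoint a := by
      rw [hadjB, hBdef, cfc_mul h h _ hhc.continuousOn hhc.continuousOn]
      simp only [mul_assoc]
    rw [e1, cfc_comm_adjoint' a (fun t => h t * h t) ((hhc.mul hhc).continuousOn), mul_assoc]
    nth_rewrite 2 [← cfc_id' ℝ (a * adjoint a) hc]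
    rw [← cfc_mul (fun t => h t * h t) (fun t : ℝ => t) _ ((hhc.mul hhc).continuousOn)
      (continuous_id'.continuousOn)]
  have hmono : cfc (fun t => h t * h t * t) (a * adjoint a)
      ≤ cfc (fun t => G t * G t) (a * adjoint a) := by
    refine cfc_mono (fun t ht => ?_) ((hhc.mul hhc).mul continuous_id |>.continuousOn)
      ((hG.mul hG).continuousOn)
    have ht0 : (0:ℝ) ≤ t := hsc ht
    set s : ℝ := Real.sqrt t with hsdef
    have hs : s * s = t := Real.mul_self_sqrt ht0
    have hfg' : f s * g s = s := hfg _ (Real.sqrt_nonneg t)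
    have hfpos : 0 ≤ f s := hf0 _ (Real.sqrt_nonneg t)
    have hgpos : 0 ≤ g s := hg0 _ (Real.sqrt_nonneg t)
    have hu : 0 < f s + ε := hkpos t
    have h1 : (0:ℝ) ≤ (f s + ε)⁻¹ := by positivity
    have ht' : t = (f s * g s) * (f s * g s) := by rw [hfg']; exact hs.symm
    have hle : f s * (f s + ε)⁻¹ ≤ 1 := by
      rw [mul_inv_le_iff₀ hu, one_mul]; linarith
    have hu0 : 0 ≤ f s * (f s + ε)⁻¹ := mul_nonneg hfpos h1
    show (f s + ε)⁻¹ * (f s + ε)⁻¹ * t ≤ g s * g s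
    have expand : (f s + ε)⁻¹ * (f s + ε)⁻¹ * t
        = (f s * (f s + ε)⁻¹) * (f s * (f s + ε)⁻¹) * (g s * g s) := by
      rw [ht']; ring
    rw [expand]
    have hint : (0:ℝ) ≤ (1 - f s * (f s + ε)⁻¹) * (1 + f s * (f s + ε)⁻¹) * (g s * g s) :=
      mul_nonneg (mul_nonneg (by linarith) (by linarith)) (mul_nonneg hgpos hgpos)
    nlinarith [hint]
  have hDsa : IsSelfAdjoint (cfc G (a * adjoint a)) := cfc_predicate G _
  have hD : adjoint (cfc G (a * adjoint a)) = cfc G (a * adjoint a) := by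
    rw [← star_eq_adjoint, hDsa.star_eq]
  have hGG : cfc (fun t => G t * G t) (a * adjoint a)
      = cfc G (a * adjoint a) * cfc G (a * adjoint a) :=
    cfc_mul G G _ hG.continuousOn hG.continuousOn
  have bound2 : ‖adjoint B y‖ ≤ ‖cfc G (a * adjoint a) y‖ := by
    have e1 : ‖adjoint B y‖ ^ 2 = RCLike.re (inner ℂ (y : H) ((B * adjoint B) y) : ℂ) := by
      rw [← inner_self_eq_norm_sq (𝕜 := ℂ)]
      congr 1
      rw [ContinuousLinearMap.mul_apply]
      exact adjoint_inner_left B (adjoint B y) y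
    have e2 : ‖cfc G (a * adjoint a) y‖ ^ 2
        = RCLike.re (inner ℂ (y : H)
            ((cfc G (a * adjoint a) * cfc G (a * adjoint a)) y) : ℂ) := by
      rw [← inner_self_eq_norm_sq (𝕜 := ℂ)]
      congr 1
      rw [ContinuousLinearMap.mul_apply]
      nth_rewrite 1 [← hD]
      exact adjoint_inner_left _ _ y
    have hle : B * adjoint B ≤ cfc G (a * adjoint a) * cfc G (a * adjoint a) := by
      rw [← hGG, hS]; exact hmono
    have hpos := (nonneg_iff_isPositive _).mp (sub_nonneg.mpr hle)
    have h3 := hpos.inner_nonneg_right y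
    rw [sub_apply, inner_sub_right] at h3
    replace h3 := ((RCLike.nonneg_iff (K := ℂ)).mp h3).1
    rw [map_sub] at h3
    have hsq : ‖adjoint B y‖ ^ 2 ≤ ‖cfc G (a * adjoint a) y‖ ^ 2 := by
      rw [e1, e2]; linarith
    nlinarith [norm_nonneg (adjoint B y), norm_nonneg (cfc G (a * adjoint a) y), hsq]
  calc ‖(inner ℂ (a x) y : ℂ)‖
      = ‖(inner ℂ (cfc k (adjoint a * a) x) (adjoint B y) : ℂ)‖ := by rw [step1]
    _ ≤ ‖cfc k (adjoint a * a) x‖ * ‖adjoint B y‖ := norm_inner_le_norm _ _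
    _ ≤ (‖cfc F (adjoint a * a) x‖ + ε * ‖x‖) * ‖cfc G (a * adjoint a) y‖ :=
        mul_le_mul bound1 bound2 (norm_nonneg _) (by positivity)
    _ = ‖cfc F (adjoint a * a) x‖ * ‖cfc G (a * adjoint a) y‖ + ε * Q := by
        rw [hQdef]; ring
    _ ≤ ‖cfc F (adjoint a * a) x‖ * ‖cfc G (a * adjoint a) y‖ + η := by
        have hεQ : ε * Q ≤ η := by
          rw [hεdef, div_mul_eq_mul_div, div_le_iff₀ (by positivity)]
          nlinarith [hη.le, hQ0]
        linarith

open ContinuousLinearMap in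
lemma entry_bound_offdiag' {H : Type*} [NormedAddCommGroup H] [InnerProductSpace ℂ H]
    [CompleteSpace H]
    (f g : ℝ → ℝ) (hf : ContinuousOn f (Set.Ici 0)) (hg : ContinuousOn g (Set.Ici 0))
    (hf0 : ∀ t ∈ Set.Ici (0:ℝ), 0 ≤ f t) (hg0 : ∀ t ∈ Set.Ici (0:ℝ), 0 ≤ g t)
    (hfg : ∀ t ∈ Set.Ici (0:ℝ), f t * g t = t) (a : H →L[ℂ] H) (u v : H) :
    ‖(inner ℂ (a u) v : ℂ)‖ ≤
      (Real.sqrt ‖(cfc f (absOp a)) ^ 2‖ * Real.sqrt ‖(cfc g (absOp (adjoint a))) ^ 2‖)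
        * (‖u‖ * ‖v‖) := by
  have hFsa : IsSelfAdjoint (cfc f (absOp a)) := cfc_predicate f _
  have hGsa : IsSelfAdjoint (cfc g (absOp (adjoint a))) := cfc_predicate g _
  have hF2 : Real.sqrt ‖(cfc f (absOp a)) ^ 2‖ = ‖cfc f (absOp a)‖ := by
    have : ‖(cfc f (absOp a)) ^ 2‖ = ‖cfc f (absOp a)‖ * ‖cfc f (absOp a)‖ := by
      rw [sq, show cfc f (absOp a) * cfc f (absOp a)
        = star (cfc f (absOp a)) * cfc f (absOp a) by rw [hFsa.star_eq]]
      exact CStarRing.norm_star_mul_self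
    rw [this, Real.sqrt_mul_self (norm_nonneg _)]
  have hG2 : Real.sqrt ‖(cfc g (absOp (adjoint a))) ^ 2‖ = ‖cfc g (absOp (adjoint a))‖ := by
    have : ‖(cfc g (absOp (adjoint a))) ^ 2‖
        = ‖cfc g (absOp (adjoint a))‖ * ‖cfc g (absOp (adjoint a))‖ := by
      rw [sq, show cfc g (absOp (adjoint a)) * cfc g (absOp (adjoint a))
        = star (cfc g (absOp (adjoint a))) * cfc g (absOp (adjoint a)) by rw [hGsa.star_eq]]
      exact CStarRing.norm_star_mul_self
    rw [this, Real.sqrt_mul_self (norm_nonneg _)]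
  rw [hF2, hG2]
  calc ‖(inner ℂ (a u) v : ℂ)‖
      ≤ ‖cfc f (absOp a) u‖ * ‖cfc g (absOp (adjoint a)) v‖ :=
        mixed_schwarz' f g hf hg hf0 hg0 hfg a u v
    _ ≤ (‖cfc f (absOp a)‖ * ‖u‖) * (‖cfc g (absOp (adjoint a))‖ * ‖v‖) :=
        mul_le_mul (le_opNorm _ _) (le_opNorm _ _) (norm_nonneg _) (by positivity)
    _ = (‖cfc f (absOp a)‖ * ‖cfc g (absOp (adjoint a))‖) * (‖u‖ * ‖v‖) := by ring

open ContinuousLinearMap in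
lemma entry_bound_diag' {H : Type*} [NormedAddCommGroup H] [InnerProductSpace ℂ H]
    [CompleteSpace H]
    (f g : ℝ → ℝ) (hf : ContinuousOn f (Set.Ici 0)) (hg : ContinuousOn g (Set.Ici 0))
    (hf0 : ∀ t ∈ Set.Ici (0:ℝ), 0 ≤ f t) (hg0 : ∀ t ∈ Set.Ici (0:ℝ), 0 ≤ g t)
    (hfg : ∀ t ∈ Set.Ici (0:ℝ), f t * g t = t) (a : H →L[ℂ] H) (u : H) :
    ‖(inner ℂ (a u) u : ℂ)‖ ≤
      ‖(cfc f (absOp a)) ^ 2 + (cfc g (absOp (adjoint a))) ^ 2‖ / 2 * (‖u‖ * ‖u‖) := by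
  set F := cfc f (absOp a) with hFdef
  set G := cfc g (absOp (adjoint a)) with hGdef
  have hFsa : IsSelfAdjoint F := cfc_predicate f _
  have hGsa : IsSelfAdjoint G := cfc_predicate g _
  have hFadj : adjoint F = F := by rw [← star_eq_adjoint, hFsa.star_eq]
  have hGadj : adjoint G = G := by rw [← star_eq_adjoint, hGsa.star_eq]
  have eF : (inner ℂ (u : H) ((F ^ 2) u) : ℂ) = inner ℂ (F u) (F u) := by
    rw [sq, ContinuousLinearMap.mul_apply, ← adjoint_inner_left F (F u) u, hFadj]
  have eG : (inner ℂ (u : H) ((G ^ 2) u) : ℂ) = inner ℂ (G u) (G u) := by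
    rw [sq, ContinuousLinearMap.mul_apply, ← adjoint_inner_left G (G u) u, hGadj]
  have hsum : ‖F u‖ ^ 2 + ‖G u‖ ^ 2 = RCLike.re (inner ℂ (u : H) ((F ^ 2 + G ^ 2) u) : ℂ) := by
    rw [add_apply, inner_add_right, map_add, eF, eG,
      inner_self_eq_norm_sq (𝕜 := ℂ), inner_self_eq_norm_sq (𝕜 := ℂ)]
  have hbound : RCLike.re (inner ℂ (u : H) ((F ^ 2 + G ^ 2) u) : ℂ)
      ≤ ‖F ^ 2 + G ^ 2‖ * (‖u‖ * ‖u‖) := by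
    refine (RCLike.re_le_norm _).trans ?_
    refine (norm_inner_le_norm _ _).trans ?_
    calc ‖u‖ * ‖(F ^ 2 + G ^ 2) u‖ ≤ ‖u‖ * (‖F ^ 2 + G ^ 2‖ * ‖u‖) :=
          mul_le_mul_of_nonneg_left (le_opNorm _ _) (norm_nonneg _)
      _ = ‖F ^ 2 + G ^ 2‖ * (‖u‖ * ‖u‖) := by ring
  have hms : ‖(inner ℂ (a u) u : ℂ)‖ ≤ ‖F u‖ * ‖G u‖ :=
    mixed_schwarz' f g hf hg hf0 hg0 hfg a u u
  have hamgm : ‖F u‖ * ‖G u‖ ≤ (‖F u‖ ^ 2 + ‖G u‖ ^ 2) / 2 := by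
    nlinarith [sq_nonneg (‖F u‖ - ‖G u‖)]
  calc ‖(inner ℂ (a u) u : ℂ)‖ ≤ (‖F u‖ ^ 2 + ‖G u‖ ^ 2) / 2 := hms.trans hamgm
    _ ≤ ‖F ^ 2 + G ^ 2‖ * (‖u‖ * ‖u‖) / 2 := by rw [hsum]; linarith
    _ = ‖F ^ 2 + G ^ 2‖ / 2 * (‖u‖ * ‖u‖) := by ring

/-- `w(T) ≤ w(T̃)` where `t̃_ii = ‖f²(|T_ii|) + g²(|T_ii*|)‖/2` and
`t̃_ij = ‖f²(|T_ij|)‖^{1/2}‖g²(|T_ij*|)‖^{1/2}` for `i ≠ j`. -/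
theorem numRadius_opMatrix_fg_bound {n : ℕ} {H : Type*}
    [NormedAddCommGroup H] [InnerProductSpace ℂ H] [CompleteSpace H]
    (f g : ℝ → ℝ) (hf : ContinuousOn f (Set.Ici 0)) (hg : ContinuousOn g (Set.Ici 0))
    (hf0 : ∀ t ∈ Set.Ici (0 : ℝ), 0 ≤ f t) (hg0 : ∀ t ∈ Set.Ici (0 : ℝ), 0 ≤ g t)
    (hfg : ∀ t ∈ Set.Ici (0 : ℝ), f t * g t = t)
    (Tij : ∀ _ _ : Fin n, H →L[ℂ] H)
    (T : PiLp 2 (fun _ : Fin n => H) →L[ℂ] PiLp 2 (fun _ : Fin n => H))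
    (hT : ∀ (x : PiLp 2 (fun _ : Fin n => H)) (i : Fin n), T x i = ∑ j, Tij i j (x j))
    (Ttil : Matrix (Fin n) (Fin n) ℝ)
    (hTtil : ∀ i j, Ttil i j =
      if i = j then
        ‖(cfc f (absOp (Tij i i))) ^ 2 +
          (cfc g (absOp (ContinuousLinearMap.adjoint (Tij i i)))) ^ 2‖ / 2
      else
        Real.sqrt ‖(cfc f (absOp (Tij i j))) ^ 2‖ *
          Real.sqrt ‖(cfc g (absOp (ContinuousLinearMap.adjoint (Tij i j)))) ^ 2‖) :
    numRadius T ≤ numRadius (Matrix.toEuclideanCLM (𝕜 := ℂ) (Ttil.map Complex.ofReal)) := by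
  set M := Matrix.toEuclideanCLM (𝕜 := ℂ) (Ttil.map Complex.ofReal) with hMdef
  have hRHS0 : 0 ≤ numRadius M :=
    Real.sSup_nonneg <| by rintro r ⟨y, -, rfl⟩; exact norm_nonneg _
  have hbdd : BddAbove {r : ℝ | ∃ y : EuclideanSpace ℂ (Fin n), ‖y‖ = 1 ∧
      r = ‖(inner ℂ (M y) y : ℂ)‖} := by
    refine ⟨‖M‖, ?_⟩
    rintro r ⟨y, hy, rfl⟩
    calc ‖(inner ℂ (M y) y : ℂ)‖ ≤ ‖M y‖ * ‖y‖ := norm_inner_le_norm _ _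
      _ ≤ (‖M‖ * ‖y‖) * ‖y‖ :=
          mul_le_mul_of_nonneg_right (M.le_opNorm y) (norm_nonneg _)
      _ = ‖M‖ := by rw [hy]; ring
  refine Real.sSup_le ?_ hRHS0
  rintro r ⟨x, hx, rfl⟩
  set y : EuclideanSpace ℂ (Fin n) := WithLp.toLp 2 (fun i => (‖x i‖ : ℂ)) with hydef
  have hx2 : ∑ i, ‖x i‖ ^ 2 = 1 := by
    have h1 : ‖x‖ = Real.sqrt (∑ i, ‖x i‖ ^ 2) := by
      rw [PiLp.norm_eq_of_L2]
    rw [hx] at h1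
    have h2 : (0:ℝ) ≤ ∑ i, ‖x i‖ ^ 2 := by positivity
    nlinarith [Real.sq_sqrt h2]
  have hy : ‖y‖ = 1 := by
    rw [EuclideanSpace.norm_eq]
    have : ∀ i, ‖y i‖ = ‖x i‖ := fun i => by
      rw [hydef]; exact Complex.norm_real _ |>.trans (abs_norm _)
    rw [show (∑ i, ‖y i‖ ^ 2) = ∑ i, ‖x i‖ ^ 2 from Finset.sum_congr rfl
      (fun i _ => by rw [this i]), hx2, Real.sqrt_one]
  have hMy : ∀ i, (M y) i = ∑ j, ((Ttil i j : ℂ) * (‖x j‖ : ℂ)) := by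
    intro i
    have h1 := Matrix.ofLp_toEuclideanCLM (𝕜 := ℂ) (Ttil.map Complex.ofReal) y
    have h2 := congrFun h1 i
    simp [hMdef, Matrix.mulVec, dotProduct, Matrix.map_apply, hydef]
  set s : ℝ := ∑ i, ∑ j, Ttil i j * (‖x j‖ * ‖x i‖) with hsdef
  have hinner2 : (inner ℂ (M y) y : ℂ) = (s : ℂ) := by
    rw [PiLp.inner_apply]
    simp only [RCLike.inner_apply, hMy]
    simp only [hydef, hsdef, WithLp.ofLp_toLp]
    push_cast
    refine Finset.sum_congr rfl fun i _ => ?_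
    rw [map_sum, Finset.mul_sum]
    refine Finset.sum_congr rfl fun j _ => ?_
    rw [← Complex.ofReal_mul, Complex.conj_ofReal]
    push_cast
    ring
  have hsle : s ≤ ‖(inner ℂ (M y) y : ℂ)‖ := by
    rw [hinner2]
    calc s ≤ |s| := le_abs_self s
      _ = ‖(s:ℂ)‖ := (Complex.norm_real s).symm
  have hterm : ∀ i j, ‖(inner ℂ (Tij i j (x j)) (x i) : ℂ)‖ ≤ Ttil i j * (‖x j‖ * ‖x i‖) := by
    intro i j
    by_cases hij : i = j
    · subst hij
      rw [hTtil i i, if_pos rfl]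
      exact entry_bound_diag' f g hf hg hf0 hg0 hfg (Tij i i) (x i)
    · rw [hTtil i j, if_neg hij]
      exact entry_bound_offdiag' f g hf hg hf0 hg0 hfg (Tij i j) (x j) (x i)
  have hTx : (inner ℂ (T x) x : ℂ) = ∑ i, ∑ j, (inner ℂ (Tij i j (x j)) (x i) : ℂ) := by
    rw [PiLp.inner_apply]
    refine Finset.sum_congr rfl fun i _ => ?_
    rw [hT x i]
    exact sum_inner _ _ _
  calc ‖(inner ℂ (T x) x : ℂ)‖
      = ‖∑ i, ∑ j, (inner ℂ (Tij i j (x j)) (x i) : ℂ)‖ := by rw [hTx]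
    _ ≤ ∑ i, ∑ j, ‖(inner ℂ (Tij i j (x j)) (x i) : ℂ)‖ := by
        refine (norm_sum_le _ _).trans ?_
        exact Finset.sum_le_sum fun i _ => norm_sum_le _ _
    _ ≤ s := Finset.sum_le_sum fun i _ => Finset.sum_le_sum fun j _ => hterm i j
    _ ≤ ‖(inner ℂ (M y) y : ℂ)‖ := hsle
    _ ≤ numRadius M := le_csSup hbdd ⟨y, hy, rfl⟩
end
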